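/- arXiv:1212.6735 — 6 statements merged into one kernel-verified Lean document; each statement's English description precedes it below -/
import Mathlib

section
/- For all natural numbers n and δ with δ < 2n/3, there exists a connected edge-coloured graph G on n vertices with δ^c(G) = δ such that every collection of vertex-disjoint properly coloured cycles in G spans at most 3δ/2 vertices; in particular G contains no properly coloured 2-factor and no properly coloured Hamiltonian cycle. -/
/-!
Split the vertices into a clique `A` of size `δ` and an independent set `B` of the remaining
`n - δ ≥ 1` vertices, with all edges between `A` and `B`. An edge `uv` inside `A` gets colour
`u + v`, and all edges from `a ∈ A` to `B` get one colour depending only on `a`, so every vertex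
sees exactly `δ` colours. On a properly coloured cycle a `B`-vertex has both cycle neighbours in
`A`, and an `A`-vertex cannot have both in `B`; so every `B`-vertex of the cycle is followed by
two `A`-vertices, and at most a third of the cycle lies in `B`. Vertex-disjoint cycles share the
`δ` vertices of `A`, hence span at most `3δ/2` vertices.
-/

open SimpleGraph

/-- A list of vertices forms a properly coloured walk: consecutive vertices are
adjacent and consecutive edges receive different colours. -/
def IsPCWalk {V : Type*} (G : SimpleGraph V) (c : V → V → ℕ) : List V → Prop
  | a :: b :: d :: rest => G.Adj a b ∧ c a b ≠ c b d ∧ IsPCWalk G c (b :: d :: rest)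
  | [a, b] => G.Adj a b
  | _ => True

/-- A properly coloured path: distinct vertices forming a properly coloured walk. -/
def IsPCPath {V : Type*} (G : SimpleGraph V) (c : V → V → ℕ) (l : List V) : Prop :=
  l.Nodup ∧ IsPCWalk G c l

/-- A properly coloured cycle, given as a list of (distinct) vertices of length ≥ 3;
closing the cycle by appending the first two vertices ensures all adjacencies and
colour conditions, including around the wrap-around vertex. -/
def IsPCCycle {V : Type*} (G : SimpleGraph V) (c : V → V → ℕ) (l : List V) : Prop :=
  3 ≤ l.length ∧ l.Nodup ∧ IsPCWalk G c (l ++ l.take 2)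

/-- The colour degree of `v`: the number of distinct colours on edges at `v`. -/
noncomputable def colourDeg {V : Type*} (G : SimpleGraph V) (c : V → V → ℕ) (v : V) : ℕ :=
  ((c v) '' {w | G.Adj v w}).ncard

/-- `colourDeg1 G c v a`: the number of edges at `v` whose colour differs from `a`.
`δ₁^c(G) ≥ k` is then `∀ v a, k ≤ colourDeg1 G c v a`. -/
noncomputable def colourDeg1 {V : Type*} (G : SimpleGraph V) (c : V → V → ℕ) (v : V) (a : ℕ) : ℕ :=
  {w | G.Adj v w ∧ c v w ≠ a}.ncard

open Finset

theorem List.getElem_append_take_two {α : Type*} (l : List α) (hl : 2 ≤ l.length) {k : ℕ}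
    (hk : k < l.length + 2) :
    (l ++ l.take 2)[k]'(by simp; omega) = l[k % l.length]'(Nat.mod_lt _ (by omega)) := by
  rcases lt_or_ge k l.length with hkl | hkl
  · simp only [List.getElem_append_left hkl, Nat.mod_eq_of_lt hkl]
  · rw [List.getElem_append_right hkl, List.getElem_take]
    congr 1
    rw [Nat.mod_eq_sub_mod hkl, Nat.mod_eq_of_lt (by omega)]

theorem coe_finRotate_eq_mod {n : ℕ} (i : Fin n) : (finRotate n i : ℕ) = (i + 1) % n := by
  have := i.neZero
  rw [finRotate_apply, Fin.val_add, Fin.val_one', Nat.add_mod_mod]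

theorem Finset.three_mul_card_le_of_perm {α : Type*} [Fintype α] [DecidableEq α]
    (σ : Equiv.Perm α) {s : Finset α} (h₁ : ∀ x ∈ s, σ x ∉ s) (h₂ : ∀ x ∈ s, σ (σ x) ∉ s) :
    3 * #s ≤ Fintype.card α := by
  set t₁ := s.map σ.toEmbedding
  set t₂ := t₁.map σ.toEmbedding
  have d01 : Disjoint s t₁ := Finset.disjoint_left.2 fun x hx hx₁ => by
    obtain ⟨y, hy, rfl⟩ := mem_map.1 hx₁
    exact h₁ y hy hx
  have d02 : Disjoint s t₂ := Finset.disjoint_left.2 fun x hx hx₂ => by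
    obtain ⟨_, hy, rfl⟩ := mem_map.1 hx₂
    obtain ⟨z, hz, rfl⟩ := mem_map.1 hy
    exact h₂ z hz hx
  have d12 : Disjoint t₁ t₂ := Finset.disjoint_left.2 fun x hx₁ hx₂ => by
    obtain ⟨y, hy, rfl⟩ := mem_map.1 hx₁
    obtain ⟨w, hw, hwy⟩ := mem_map.1 hx₂
    obtain ⟨z, hz, rfl⟩ := mem_map.1 hw
    have hzy : σ z = y := σ.injective hwy
    exact h₁ z hz (hzy ▸ hy)
  have c₁ : #t₁ = #s := card_map _
  have c₂ : #t₂ = #t₁ := card_map _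
  calc 3 * #s = #(s ∪ t₁ ∪ t₂) := by
        rw [card_union_of_disjoint (disjoint_union_left.2 ⟨d02, d12⟩),
          card_union_of_disjoint d01]
        omega
    _ ≤ Fintype.card α := card_le_univ _

theorem card_le_sum_length_of_cover {V : Type*} [Fintype V] (S : Finset (List V))
    (hcover : ∀ v, ∃ l ∈ S, v ∈ l) : Fintype.card V ≤ ∑ l ∈ S, l.length := by
  classical
  calc Fintype.card V = #(univ : Finset V) := card_univ.symm
    _ ≤ #(S.biUnion List.toFinset) := card_le_card fun v _ => by
        obtain ⟨l, hl, hv⟩ := hcover v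
        exact mem_biUnion.2 ⟨l, hl, List.mem_toFinset.2 hv⟩
    _ ≤ ∑ l ∈ S, #l.toFinset := card_biUnion_le
    _ ≤ ∑ l ∈ S, l.length := sum_le_sum fun l _ => List.toFinset_card_le l

theorem sum_card_filter_toFinset_le {V : Type*} [Fintype V] [DecidableEq V] (p : V → Prop)
    [DecidablePred p] (S : Finset (List V))
    (hdisj : ∀ l ∈ S, ∀ l' ∈ S, l ≠ l' → ∀ v, v ∈ l → v ∉ l') :
    ∑ l ∈ S, #{v ∈ l.toFinset | p v} ≤ #{v | p v} := by
  rw [← card_biUnion]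
  · exact card_le_card fun v hv => by
      obtain ⟨l, -, hv⟩ := mem_biUnion.1 hv
      simpa using (mem_filter.1 hv).2
  · intro l hl l' hl' hne
    simp only [Function.onFun, Finset.disjoint_left, mem_filter, List.mem_toFinset]
    exact fun v hv hv' => hdisj l hl l' hl' hne v hv.1 hv'.1

section Cycles

variable {V : Type*} {G : SimpleGraph V} {c : V → V → ℕ}

theorem IsPCWalk.adj_getElem : ∀ {m : List V}, IsPCWalk G c m → ∀ j (h : j + 1 < m.length),
    G.Adj (m[j]'(by omega)) m[j + 1]
  | [_, _], hw, 0, _ => hw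
  | _ :: _ :: _ :: _, hw, 0, _ => hw.1
  | _ :: _ :: _ :: _, hw, j + 1, h => IsPCWalk.adj_getElem hw.2.2 j (by simp at h ⊢; omega)

theorem IsPCWalk.colour_getElem_ne : ∀ {m : List V}, IsPCWalk G c m → ∀ j (h : j + 2 < m.length),
    c (m[j]'(by omega)) (m[j + 1]'(by omega)) ≠ c (m[j + 1]'(by omega)) m[j + 2]
  | _ :: _ :: _ :: _, hw, 0, _ => hw.2.1
  | _ :: _ :: _ :: _, hw, j + 1, h =>
      IsPCWalk.colour_getElem_ne hw.2.2 j (by simp at h ⊢; omega)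

variable {l : List V}

theorem IsPCCycle.adj_finRotate (hl : IsPCCycle G c l) (i : Fin l.length) :
    G.Adj l[i] l[finRotate _ i] := by
  obtain ⟨h3, -, hw⟩ := hl
  have := hw.adj_getElem i (by simp; omega)
  rw [List.getElem_append_take_two _ (by omega) (by omega),
    List.getElem_append_take_two _ (by omega) (by omega)] at this
  convert this using 2 <;> simp only [Fin.getElem_fin, coe_finRotate_eq_mod, Nat.mod_eq_of_lt i.isLt]

theorem IsPCCycle.colour_finRotate_ne (hl : IsPCCycle G c l) (i : Fin l.length) :
    c l[i] l[finRotate _ i] ≠ c l[finRotate _ i] l[finRotate _ (finRotate _ i)] := by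
  obtain ⟨h3, -, hw⟩ := hl
  have := hw.colour_getElem_ne i (by simp; omega)
  rw [List.getElem_append_take_two _ (by omega) (by omega),
    List.getElem_append_take_two _ (by omega) (by omega),
    List.getElem_append_take_two _ (by omega) (by omega)] at this
  convert this using 3 <;> simp only [Fin.getElem_fin, coe_finRotate_eq_mod,
    Nat.mod_eq_of_lt i.isLt, Nat.mod_add_mod, add_assoc, Nat.reduceAdd]

end Cycles

section SplitGraph

variable {n δ : ℕ}

def splitGraph (n δ : ℕ) : SimpleGraph (Fin n) :=
  .fromRel fun u _ => u.val < δ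

theorem splitGraph_adj {u v : Fin n} :
    (splitGraph n δ).Adj u v ↔ u ≠ v ∧ (u.val < δ ∨ v.val < δ) :=
  fromRel_adj _ _ _

def splitColouring (δ : ℕ) (u v : Fin n) : ℕ :=
  if u.val < δ ∧ v.val < δ then u.val + v.val else 2 * δ + min u.val v.val + 1

theorem splitColouring_comm (δ : ℕ) (u v : Fin n) : splitColouring δ u v = splitColouring δ v u := by
  simp [splitColouring, and_comm, Nat.add_comm u.val, Nat.min_comm u.val]

theorem splitColouring_of_lt_of_lt {u v : Fin n} (hu : u.val < δ) (hv : v.val < δ) :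
    splitColouring δ u v = u.val + v.val := by
  rw [splitColouring, if_pos ⟨hu, hv⟩]

theorem splitColouring_of_lt_of_le {u v : Fin n} (hu : u.val < δ) (hv : δ ≤ v.val) :
    splitColouring δ u v = 2 * δ + u.val + 1 := by
  rw [splitColouring, if_neg (by omega), Nat.min_eq_left (by omega)]

theorem splitColouring_of_le_of_lt {u v : Fin n} (hu : δ ≤ u.val) (hv : v.val < δ) :
    splitColouring δ u v = 2 * δ + v.val + 1 := by
  rw [splitColouring_comm, splitColouring_of_lt_of_le hv hu]

theorem splitGraph_connected (hδ : 0 < δ) (hn : 0 < n) : (splitGraph n δ).Connected := by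
  let z : Fin n := ⟨0, hn⟩
  have hz : ∀ u, (splitGraph n δ).Reachable u z := fun u => by
    by_cases hu : u = z
    · rw [hu]
    · exact Adj.reachable (splitGraph_adj.2 ⟨hu, Or.inr hδ⟩)
  exact (connected_iff _).2 ⟨fun u v => (hz u).trans (hz v).symm, ⟨z⟩⟩

theorem ncard_setOf_val_lt (h : δ ≤ n) : {w : Fin n | w.val < δ}.ncard = δ := by
  rw [← coe_filter_univ, Set.ncard_coe_finset, Fin.card_filter_val_lt, min_eq_right h]

theorem colourDeg_splitColouring_of_le {v : Fin n} (hv : δ ≤ v.val) (hn : δ ≤ n) :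
    colourDeg (splitGraph n δ) (splitColouring δ) v = δ := by
  have hnbr : {w | (splitGraph n δ).Adj v w} = {w | w.val < δ} := by
    ext w
    simp only [splitGraph_adj, Set.mem_ofPred_eq]
    exact ⟨fun h => h.2.resolve_left (by omega), fun h => ⟨fun e => by omega, Or.inr h⟩⟩
  rw [colourDeg, hnbr, Set.InjOn.ncard_image, ncard_setOf_val_lt hn]
  intro a ha b hb hab
  rw [splitColouring_of_le_of_lt hv ha, splitColouring_of_le_of_lt hv hb] at hab
  exact Fin.ext (by omega)

theorem colourDeg_splitColouring_of_lt {v : Fin n} (hv : v.val < δ) (hn : δ < n) :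
    colourDeg (splitGraph n δ) (splitColouring δ) v = δ := by
  set A : Set (Fin n) := {w | w.val < δ}
  have himage : splitColouring δ v '' {w | (splitGraph n δ).Adj v w} =
      insert (2 * δ + v.val + 1) (splitColouring δ v '' (A \ {v})) := by
    ext x
    simp only [splitGraph_adj, Set.mem_image, Set.mem_insert_iff, Set.mem_ofPred_eq, Set.mem_sdiff,
      Set.mem_singleton_iff, A]
    constructor
    · rintro ⟨w, hw, rfl⟩
      by_cases hw' : w.val < δ
      · exact Or.inr ⟨w, ⟨hw', Ne.symm hw.1⟩, rfl⟩
      · exact Or.inl (splitColouring_of_lt_of_le hv (by omega))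
    · rintro (rfl | ⟨w, ⟨hw, hwv⟩, rfl⟩)
      · exact ⟨⟨δ, hn⟩, ⟨fun e => by simp [e] at hv, Or.inl hv⟩,
          splitColouring_of_lt_of_le hv le_rfl⟩
      · exact ⟨w, ⟨Ne.symm hwv, Or.inl hv⟩, rfl⟩
  have hinj : Set.InjOn (splitColouring δ v) (A \ {v}) := by
    intro a ha b hb hab
    rw [splitColouring_of_lt_of_lt hv ha.1, splitColouring_of_lt_of_lt hv hb.1] at hab
    exact Fin.ext (by omega)
  have hnew : 2 * δ + v.val + 1 ∉ splitColouring δ v '' (A \ {v}) := by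
    rintro ⟨w, hw, e⟩
    rw [splitColouring_of_lt_of_lt hv hw.1] at e
    have : w.val < δ := hw.1
    omega
  rw [colourDeg, himage, Set.ncard_insert_of_notMem hnew, hinj.ncard_image,
    Set.ncard_sdiff_singleton_of_mem (show v ∈ A from hv), ncard_setOf_val_lt hn.le]
  omega

theorem colourDeg_splitColouring (hn : δ < n) (v : Fin n) :
    colourDeg (splitGraph n δ) (splitColouring δ) v = δ := by
  rcases lt_or_ge v.val δ with hv | hv
  · exact colourDeg_splitColouring_of_lt hv hn
  · exact colourDeg_splitColouring_of_le hv hn.le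

theorem IsPCCycle.two_mul_length_le_splitGraph {l : List (Fin n)}
    (hl : IsPCCycle (splitGraph n δ) (splitColouring δ) l) :
    2 * l.length ≤ 3 * #{x ∈ l.toFinset | x.val < δ} := by
  set σ := finRotate l.length
  have next_lt : ∀ i : Fin l.length, δ ≤ l[i].val → l[σ i].val < δ := fun i hi =>
    (splitGraph_adj.1 (hl.adj_finRotate i)).2.resolve_left (by omega)
  -- otherwise both cycle edges at the `A`-vertex `l[σ i]` go to `B`, so they share its colour
  have next_next_lt : ∀ i : Fin l.length, δ ≤ l[i].val → l[σ (σ i)].val < δ := fun i hi => by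
    by_contra h
    apply hl.colour_finRotate_ne i
    rw [splitColouring_of_le_of_lt hi (next_lt i hi),
      splitColouring_of_lt_of_le (next_lt i hi) (not_lt.1 h)]
  have hB : 3 * #{i : Fin l.length | δ ≤ l[i].val} ≤ l.length := by
    simpa using three_mul_card_le_of_perm σ (s := {i : Fin l.length | δ ≤ l[i].val})
      (fun i hi => by simpa using next_lt i (by simpa using hi))
      (fun i hi => by simpa using next_next_lt i (by simpa using hi))
  have hA : #{i : Fin l.length | l[i].val < δ} ≤ #{x ∈ l.toFinset | x.val < δ} :=
    card_le_card_of_injOn (fun i => l[i]) (fun i hi => by simp_all)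
      (fun i _ j _ e => Fin.ext ((List.Nodup.getElem_inj_iff hl.2.1).1 e))
  have hsplit := card_filter_add_card_filter_not (s := (univ : Finset (Fin l.length)))
    (fun i => l[i].val < δ)
  simp only [not_lt, card_univ, Fintype.card_fin] at hsplit
  omega

theorem two_mul_sum_length_le_of_splitGraph (hn : δ ≤ n) (S : Finset (List (Fin n)))
    (hcyc : ∀ l ∈ S, IsPCCycle (splitGraph n δ) (splitColouring δ) l)
    (hdisj : ∀ l ∈ S, ∀ l' ∈ S, l ≠ l' → ∀ v, v ∈ l → v ∉ l') :
    2 * ∑ l ∈ S, l.length ≤ 3 * δ :=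
  calc 2 * ∑ l ∈ S, l.length = ∑ l ∈ S, 2 * l.length := mul_sum _ _ _
    _ ≤ ∑ l ∈ S, 3 * #{x ∈ l.toFinset | x.val < δ} :=
        sum_le_sum fun l hl => (hcyc l hl).two_mul_length_le_splitGraph
    _ = 3 * ∑ l ∈ S, #{x ∈ l.toFinset | x.val < δ} := (mul_sum _ _ _).symm
    _ ≤ 3 * #{x : Fin n | x.val < δ} := by
        gcongr
        exact sum_card_filter_toFinset_le _ S hdisj
    _ = 3 * δ := by rw [Fin.card_filter_val_lt, min_eq_right hn]

end SplitGraph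

/-- For all `n, δ ≥ 1` with `δ < 2n/3` there is a connected edge-coloured
graph on `n` vertices with minimum colour degree exactly `δ` in which every collection of
vertex-disjoint properly coloured cycles spans at most `3δ/2` vertices; in particular it has
no properly coloured 2-factor and no properly coloured Hamiltonian cycle. -/
theorem stmt3 (n δ : ℕ) (hδ : 1 ≤ δ) (h : 3 * δ < 2 * n) :
    ∃ (V : Type) (inst : Fintype V) (G : SimpleGraph V) (c : V → V → ℕ),
      @Fintype.card V inst = n ∧
      G.Connected ∧
      (∀ u v, c u v = c v u) ∧
      (∀ v : V, δ ≤ colourDeg G c v) ∧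
      (∃ v : V, colourDeg G c v = δ) ∧
      (∀ S : Finset (List V),
        (∀ l ∈ S, IsPCCycle G c l) →
        (∀ l ∈ S, ∀ l' ∈ S, l ≠ l' → ∀ v, v ∈ l → v ∉ l') →
        2 * (∑ l ∈ S, l.length) ≤ 3 * δ) ∧
      (¬ ∃ S : Finset (List V),
        (∀ l ∈ S, IsPCCycle G c l) ∧
        (∀ l ∈ S, ∀ l' ∈ S, l ≠ l' → ∀ v, v ∈ l → v ∉ l') ∧
        (∀ v : V, ∃ l ∈ S, v ∈ l)) ∧
      (¬ ∃ l : List V, IsPCCycle G c l ∧ l.length = n) := by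
  have hδn : δ < n := by omega
  have hbound := two_mul_sum_length_le_of_splitGraph hδn.le
  refine ⟨Fin n, inferInstance, splitGraph n δ, splitColouring δ, Fintype.card_fin n,
    splitGraph_connected hδ (by omega), splitColouring_comm δ,
    fun v => (colourDeg_splitColouring hδn v).ge, ⟨⟨0, by omega⟩, colourDeg_splitColouring hδn _⟩,
    hbound, ?_, ?_⟩
  · rintro ⟨S, hcyc, hdisj, hcover⟩
    have hspan := card_le_sum_length_of_cover S hcover
    have hsmall := hbound S hcyc hdisj
    rw [Fintype.card_fin] at hspan
    omega
  · rintro ⟨l, hl, hlen⟩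
    have hsmall := hbound {l} (by simpa using hl) (by simp)
    rw [sum_singleton, hlen] at hsmall
    omega
end

section
/- Let 0 < ε < 1/2 and let n ≥ 4/ε² be an integer. Let G be an edge-coloured graph on n vertices with δ₁^c(G) ≥ (1/2 + ε)n. Then for every vertex x of G there are at least ε³n⁴ ordered 4-tuples (z₁,z₂,z₃,z₄) of distinct vertices, all different from x, such that z₁z₂z₃z₄ is a properly coloured path and z₁z₂xz₃z₄ is also a properly coloured path. -/
open SimpleGraph

/-! Choose the vertices of `z₁z₂xz₃z₄` one at a time: `z₂` any neighbour of `x`, then `z₃`, `z₁`,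
`z₄`, each adjacent to the vertex it attaches to while avoiding the two colours at that vertex that
would spoil proper colouring of either path. Two sets of at least `(1/2 + ε)n` neighbours of
colour different from a given one meet in at least `2εn` vertices, so after excluding the at most
three vertices already used there are `(1/2 + ε)n · 2εn · (2εn - 2) · (2εn - 3) ≥ ε³n⁴` choices,
using `εn ≥ 4/ε > 8`. -/

open Finset

lemma mul_le_sum_of_le_card {ι : Type*} (s : Finset ι) (f : ι → ℝ) {q r : ℝ}
    (hq : q ≤ #s) (hr : 0 ≤ r) (h : ∀ i ∈ s, r ≤ f i) : q * r ≤ ∑ i ∈ s, f i :=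
  calc q * r ≤ #s * r := mul_le_mul_of_nonneg_right hq hr
    _ = #s • r := (nsmul_eq_mul _ _).symm
    _ ≤ ∑ i ∈ s, f i := card_nsmul_le_sum s f r h

lemma card_add_card_le_card_inter_add_card {α : Type*} [Fintype α] [DecidableEq α]
    (s t : Finset α) : #s + #t ≤ #(s ∩ t) + Fintype.card α := by
  rw [← card_inter_add_card_union]
  exact Nat.add_le_add_left (card_le_univ _) _

lemma sub_le_card_sdiff {α : Type*} [DecidableEq α] {s t : Finset α} {r : ℝ} {k : ℕ}
    (hs : r ≤ #s) (ht : #t ≤ k) : r - k ≤ #(s \ t) := by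
  have h : (#s : ℝ) ≤ #(s \ t) + #t := mod_cast card_le_card_sdiff_add_card
  have ht' : (#t : ℝ) ≤ k := mod_cast ht
  linarith

lemma pow_three_mul_pow_four_le_of_three_le {ε n : ℝ} (hε : 0 ≤ ε) (hn : 0 ≤ n) (h : 3 ≤ ε * n) :
    ε ^ 3 * n ^ 4 ≤ (1 / 2 + ε) * n * (2 * (ε * n) * ((2 * (ε * n) - 2) * (2 * (ε * n) - 3))) := by
  have hm : (ε * n) ^ 2 ≤ (2 * (ε * n) - 2) * (2 * (ε * n) - 3) := by nlinarith
  have hprod : 0 ≤ 2 * (ε * n) * ((2 * (ε * n) - 2) * (2 * (ε * n) - 3)) :=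
    mul_nonneg (by linarith) (mul_nonneg (by linarith) (by linarith))
  calc ε ^ 3 * n ^ 4 = (ε * n * n) * (ε * n) ^ 2 := by ring
    _ ≤ (ε * n * n) * ((2 * (ε * n) - 2) * (2 * (ε * n) - 3)) := by gcongr
    _ = 1 / 2 * n * (2 * (ε * n) * ((2 * (ε * n) - 2) * (2 * (ε * n) - 3))) := by ring
    _ ≤ _ := by gcongr; linarith

section Absorbing

open scoped Classical

variable {V : Type*} [Fintype V] (G : SimpleGraph V) (c : V → V → ℕ)

noncomputable def colourNbhd (v : V) (a : ℕ) : Finset V := {w | G.Adj v w ∧ c v w ≠ a}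

lemma card_colourNbhd (v : V) (a : ℕ) : #(colourNbhd G c v a) = colourDeg1 G c v a := by
  rw [colourDeg1, ← Set.ncard_coe_finset]
  congr 1
  ext w
  simp [colourNbhd]

lemma two_mul_le_card_inter_colourNbhd {ε : ℝ}
    (hδ : ∀ v a, (1 / 2 + ε) * (Fintype.card V : ℝ) ≤ colourDeg1 G c v a)
    (u v : V) (a b : ℕ) :
    2 * (ε * Fintype.card V) ≤ #(colourNbhd G c u a ∩ colourNbhd G c v b) := by
  have h := card_add_card_le_card_inter_add_card (colourNbhd G c u a) (colourNbhd G c v b)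
  rw [card_colourNbhd, card_colourNbhd] at h
  have h' : (colourDeg1 G c u a + colourDeg1 G c v b : ℝ) ≤
      #(colourNbhd G c u a ∩ colourNbhd G c v b) + Fintype.card V := mod_cast h
  linarith [hδ u a, hδ v b]

def IsAbsorbingPath (x : V) (p : V × V × V × V) : Prop :=
  p.1 ≠ x ∧ p.2.1 ≠ x ∧ p.2.2.1 ≠ x ∧ p.2.2.2 ≠ x ∧
    IsPCPath G c [p.1, p.2.1, p.2.2.1, p.2.2.2] ∧ IsPCPath G c [p.1, p.2.1, x, p.2.2.1, p.2.2.2]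

/-- Entries are `⟨z₂, z₃, z₁, z₄⟩`, listed in the order the vertices are chosen. -/
noncomputable def absorbingChoices (x : V) : Finset (Σ _ : V, Σ _ : V, Σ _ : V, V) :=
  ({w | G.Adj x w} : Finset V).sigma fun z₂ =>
    (colourNbhd G c x (c x z₂) ∩ colourNbhd G c z₂ (c z₂ x)).sigma fun z₃ =>
      ((colourNbhd G c z₂ (c z₂ z₃) ∩ colourNbhd G c z₂ (c z₂ x)) \ {x, z₃}).sigma fun z₁ =>
        (colourNbhd G c z₃ (c z₃ z₂) ∩ colourNbhd G c z₃ (c z₃ x)) \ {x, z₁, z₂}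

lemma isAbsorbingPath_of_mem_absorbingChoices (hc : ∀ u v, c u v = c v u) {x : V}
    {z₁ z₂ z₃ z₄ : V} (h : ⟨z₂, z₃, z₁, z₄⟩ ∈ absorbingChoices G c x) :
    IsAbsorbingPath G c x (z₁, z₂, z₃, z₄) := by
  simp only [absorbingChoices, colourNbhd, mem_sigma, mem_filter, mem_univ, true_and, mem_inter,
    mem_sdiff, mem_insert, mem_singleton, not_or] at h
  obtain ⟨hx₂, ⟨⟨hx₃, hc₃⟩, h₂₃, -⟩, ⟨⟨⟨h₂₁, hc₁⟩, -, hc₁'⟩, h₁x, h₁₃⟩,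
    ⟨⟨⟨h₃₄, hc₄⟩, -, hc₄'⟩, h₄x, h₄₁, h₄₂⟩⟩ := h
  rw [hc z₂ z₁] at hc₁ hc₁'
  refine ⟨h₁x, hx₂.ne', hx₃.ne', h₄x, ⟨?_, h₂₁.symm, hc₁, h₂₃, ?_, h₃₄⟩,
    ⟨?_, h₂₁.symm, hc₁', hx₂.symm, ?_, hx₃, ?_, h₃₄⟩⟩
  · simp [h₂₁.ne', h₁₃, Ne.symm h₄₁, h₂₃.ne, Ne.symm h₄₂, h₃₄.ne]
  · rwa [hc z₂ z₃, ne_comm]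
  · simp [h₂₁.ne', h₁₃, Ne.symm h₄₁, h₂₃.ne, Ne.symm h₄₂, h₃₄.ne, h₁x, hx₂.ne', hx₃.ne,
      Ne.symm h₄x]
  · rwa [hc z₂ x, ne_comm]
  · rwa [hc x z₃, ne_comm]

lemma le_card_absorbingChoices {ε : ℝ}
    (hδ : ∀ v a, (1 / 2 + ε) * (Fintype.card V : ℝ) ≤ colourDeg1 G c v a)
    (hεn : 3 / 2 ≤ ε * Fintype.card V) (x : V) :
    (1 / 2 + ε) * Fintype.card V * (2 * (ε * Fintype.card V) *
      ((2 * (ε * Fintype.card V) - 2) * (2 * (ε * Fintype.card V) - 3))) ≤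
        #(absorbingChoices G c x) := by
  have hz₂ : (1 / 2 + ε) * (Fintype.card V : ℝ) ≤ #({w | G.Adj x w} : Finset V) := by
    refine (hδ x 0).trans ?_
    rw [← card_colourNbhd]
    exact mod_cast card_le_card fun w hw => by simp_all [colourNbhd]
  have hinter := two_mul_le_card_inter_colourNbhd G c hδ
  simp only [absorbingChoices, card_sigma, Nat.cast_sum]
  refine mul_le_sum_of_le_card _ _ hz₂
    (mul_nonneg (by linarith) (mul_nonneg (by linarith) (by linarith))) fun z₂ _ => ?_
  refine mul_le_sum_of_le_card _ _ (hinter _ _ _ _) (by nlinarith) fun z₃ _ => ?_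
  refine mul_le_sum_of_le_card _ _ (sub_le_card_sdiff (hinter _ _ _ _) card_le_two)
    (by linarith) fun z₁ _ => ?_
  exact sub_le_card_sdiff (hinter _ _ _ _) card_le_three

lemma card_absorbingChoices_le (hc : ∀ u v, c u v = c v u) (x : V) :
    #(absorbingChoices G c x) ≤ Nat.card {p // IsAbsorbingPath G c x p} := by
  rw [Nat.card_eq_fintype_card, Fintype.card_subtype]
  refine card_le_card_of_injOn (fun q => (q.2.2.1, q.1, q.2.1, q.2.2.2)) ?_ ?_
  · rintro ⟨z₂, z₃, z₁, z₄⟩ h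
    simpa using isAbsorbingPath_of_mem_absorbingChoices G c hc h
  · rintro ⟨z₂, z₃, z₁, z₄⟩ - ⟨z₂', z₃', z₁', z₄'⟩ - h
    simp only [Prod.mk.injEq] at h
    obtain ⟨rfl, rfl, rfl, rfl⟩ := h
    rfl

end Absorbing

/-- If `0 < ε < 1/2`, `n ≥ 4/ε²` and `δ₁^c(G) ≥ (1/2 + ε)n`, then every
vertex `x` has at least `ε³n⁴` absorbing paths: ordered 4-tuples `(z₁,z₂,z₃,z₄)` of distinct
vertices, all different from `x`, such that `z₁z₂z₃z₄` and `z₁z₂xz₃z₄` are both properly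
coloured paths. -/
theorem stmt8 {V : Type*} [Fintype V] (G : SimpleGraph V) (c : V → V → ℕ)
    (hc : ∀ u v, c u v = c v u) (ε : ℝ) (hε0 : 0 < ε) (hε1 : ε < 1 / 2)
    (hn : 4 / ε ^ 2 ≤ (Fintype.card V : ℝ))
    (hδ : ∀ (v : V) (a : ℕ),
      (1 / 2 + ε) * (Fintype.card V : ℝ) ≤ colourDeg1 G c v a) :
    ∀ x : V,
      ε ^ 3 * (Fintype.card V : ℝ) ^ 4 ≤
        Nat.card {p : V × V × V × V //
          p.1 ≠ x ∧ p.2.1 ≠ x ∧ p.2.2.1 ≠ x ∧ p.2.2.2 ≠ x ∧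
          IsPCPath G c [p.1, p.2.1, p.2.2.1, p.2.2.2] ∧
          IsPCPath G c [p.1, p.2.1, x, p.2.2.1, p.2.2.2]} := by
  intro x
  set n : ℝ := (Fintype.card V : ℝ)
  have hεn : 3 ≤ ε * n := by
    have h : 4 ≤ ε ^ 2 * n := by rwa [div_le_iff₀' (by positivity)] at hn
    nlinarith
  calc ε ^ 3 * n ^ 4
      ≤ (1 / 2 + ε) * n * (2 * (ε * n) * ((2 * (ε * n) - 2) * (2 * (ε * n) - 3))) :=
        pow_three_mul_pow_four_le_of_three_le hε0.le (Nat.cast_nonneg _) hεn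
    _ ≤ #(absorbingChoices G c x) := le_card_absorbingChoices G c hδ (by linarith) x
    _ ≤ Nat.card {p // IsAbsorbingPath G c x p} := mod_cast card_absorbingChoices_le G c hc x
end

section
/- Let 0 < ε < 1/2 and n ≥ 4/ε². Let G be an edge-coloured graph on n vertices with δ₁^c(G) ≥ (1/2 + ε)n. Then for any four distinct vertices x₁, x₂, y₁, y₂ with x₁x₂, y₁y₂ ∈ E(G), there are at least ε³n⁴ ordered 4-tuples (z₁,z₂,z₃,z₄) of distinct vertices avoiding {x₁,x₂,y₁,y₂} such that z₁z₂z₃z₄ is a properly coloured path and both z₁z₂x₁x₂ and y₁y₂z₃z₄ are properly coloured paths. -/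
open SimpleGraph

open Classical in
noncomputable def NB {V : Type*} [Fintype V] (G : SimpleGraph V) (c : V → V → ℕ)
    (v : V) (a : ℕ) : Finset V :=
  Finset.univ.filter fun w => G.Adj v w ∧ c v w ≠ a

lemma mem_NB {V : Type*} [Fintype V] {G : SimpleGraph V} {c : V → V → ℕ}
    {v : V} {a : ℕ} {w : V} : w ∈ NB G c v a ↔ G.Adj v w ∧ c v w ≠ a := by
  simp [NB]

lemma NB_card {V : Type*} [Fintype V] (G : SimpleGraph V) (c : V → V → ℕ)
    (v : V) (a : ℕ) : colourDeg1 G c v a = (NB G c v a).card := by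
  classical
  rw [colourDeg1, Set.ncard_eq_toFinset_card']
  congr 1
  ext w
  simp [Set.mem_toFinset, mem_NB]

lemma sum_ge_aux {α : Type*} (s : Finset α) (f : α → ℝ) (m r : ℝ)
    (hm : 0 ≤ m) (hr : r ≤ (s.card : ℝ)) (h : ∀ x ∈ s, m ≤ f x) :
    r * m ≤ ∑ x ∈ s, f x := by
  have h1 := Finset.card_nsmul_le_sum s f m h
  rw [nsmul_eq_mul] at h1
  nlinarith

set_option maxHeartbeats 2000000 in
/-- If `0 < ε < 1/2`, `n ≥ 4/ε²` and `δ₁^c(G) ≥ (1/2 + ε)n`, then for any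
four distinct vertices `x₁,x₂,y₁,y₂` with `x₁x₂, y₁y₂ ∈ E(G)` there are at least `ε³n⁴`
absorbing paths for `(x₁,x₂;y₁,y₂)`: 4-tuples `(z₁,z₂,z₃,z₄)` of distinct vertices avoiding
`{x₁,x₂,y₁,y₂}` such that `z₁z₂z₃z₄`, `z₁z₂x₁x₂` and `y₁y₂z₃z₄` are properly coloured paths. -/
theorem stmt9 {V : Type*} [Fintype V] (G : SimpleGraph V) (c : V → V → ℕ)
    (hc : ∀ u v, c u v = c v u) (ε : ℝ) (hε0 : 0 < ε) (hε1 : ε < 1 / 2)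
    (hn : 4 / ε ^ 2 ≤ (Fintype.card V : ℝ))
    (hδ : ∀ (v : V) (a : ℕ),
      (1 / 2 + ε) * (Fintype.card V : ℝ) ≤ colourDeg1 G c v a) :
    ∀ x₁ x₂ y₁ y₂ : V, ([x₁, x₂, y₁, y₂] : List V).Nodup →
      G.Adj x₁ x₂ → G.Adj y₁ y₂ →
      ε ^ 3 * (Fintype.card V : ℝ) ^ 4 ≤
        Nat.card {p : V × V × V × V //
          (∀ v ∈ [p.1, p.2.1, p.2.2.1, p.2.2.2], v ≠ x₁ ∧ v ≠ x₂ ∧ v ≠ y₁ ∧ v ≠ y₂) ∧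
          IsPCPath G c [p.1, p.2.1, p.2.2.1, p.2.2.2] ∧
          IsPCPath G c [p.1, p.2.1, x₁, x₂] ∧
          IsPCPath G c [y₁, y₂, p.2.2.1, p.2.2.2]} := by
  classical
  intro x₁ x₂ y₁ y₂ hnd hx hy
  simp only [List.nodup_cons, List.mem_cons, List.not_mem_nil, or_false, not_or,
    List.mem_singleton, List.nodup_nil, and_true, not_false_eq_true] at hnd
  obtain ⟨⟨hx12, hx1y1, hx1y2⟩, ⟨hx2y1, hx2y2⟩, hy12⟩ := hnd
  set n : ℝ := (Fintype.card V : ℝ) with hndef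
  have hNc : ∀ v a, (1/2 + ε) * n ≤ ((NB G c v a).card : ℝ) := by
    intro v a
    have h := hδ v a
    rwa [NB_card] at h
  have hn0 : (0:ℝ) ≤ n := Nat.cast_nonneg _
  rw [div_le_iff₀ (by positivity)] at hn
  have he8 : 8 ≤ ε * n := by
    nlinarith [mul_nonneg (mul_nonneg hε0.le hn0) (by linarith : (0:ℝ) ≤ 1 - 2*ε)]
  have hinter : ∀ (A B : Finset V), (A.card : ℝ) + B.card - n ≤ ((A ∩ B).card : ℝ) := by
    intro A B
    have h1 : ((A ∩ B).card : ℝ) + ((A ∪ B).card : ℝ) = A.card + B.card := by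
      exact_mod_cast Finset.card_inter_add_card_union A B
    have h2 : ((A ∪ B).card : ℝ) ≤ n := by
      rw [hndef]
      exact_mod_cast Finset.card_le_univ (A ∪ B)
    linarith
  have hsdiff : ∀ (A s : Finset V), (A.card : ℝ) - s.card ≤ ((A \ s).card : ℝ) := by
    intro A s
    have h1 : (A.card : ℝ) ≤ ((A \ s).card : ℝ) + s.card := by
      exact_mod_cast Finset.card_le_card_sdiff_add_card (s := A) (t := s)
    linarith
  have hins : ∀ (a : V) (s : Finset V), ((insert a s).card : ℝ) ≤ (s.card : ℝ) + 1 := by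
    intro a s
    exact_mod_cast Finset.card_insert_le a s
  set F : Finset V := {x₁, x₂, y₁, y₂} with hF
  have hF4 : (F.card : ℝ) ≤ 4 := by
    have h1 := hins x₁ ({x₂, y₁, y₂} : Finset V)
    have h2 := hins x₂ ({y₁, y₂} : Finset V)
    have h3 := hins y₁ ({y₂} : Finset V)
    have h4 : (({y₂} : Finset V).card : ℝ) = 1 := by simp
    rw [hF]
    linarith
  set A₂ : Finset V := NB G c x₁ (c x₁ x₂) \ F with hA2
  set A₃ : V → Finset V := fun z₂ =>
    (NB G c z₂ (c z₂ x₁) ∩ NB G c y₂ (c y₁ y₂)) \ insert z₂ F with hA3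
  set A₁ : V → V → Finset V := fun z₂ z₃ =>
    (NB G c z₂ (c z₂ x₁) ∩ NB G c z₂ (c z₂ z₃)) \ insert z₃ F with hA1
  set A₄ : V → V → V → Finset V := fun z₂ z₃ z₁ =>
    (NB G c z₃ (c z₂ z₃) ∩ NB G c z₃ (c y₂ z₃)) \ insert z₁ (insert z₂ F) with hA4
  have hcA2 : (1/2+ε)*n - 4 ≤ (A₂.card : ℝ) := by
    have h1 := hNc x₁ (c x₁ x₂)
    have h2 := hsdiff (NB G c x₁ (c x₁ x₂)) F
    rw [hA2]
    linarith
  have hcA3 : ∀ z₂, 2*ε*n - 5 ≤ ((A₃ z₂).card : ℝ) := by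
    intro z₂
    have h1 := hNc z₂ (c z₂ x₁)
    have h2 := hNc y₂ (c y₁ y₂)
    have h3 := hinter (NB G c z₂ (c z₂ x₁)) (NB G c y₂ (c y₁ y₂))
    have h4 := hsdiff (NB G c z₂ (c z₂ x₁) ∩ NB G c y₂ (c y₁ y₂)) (insert z₂ F)
    have h5 := hins z₂ F
    simp only [hA3]
    linarith
  have hcA1 : ∀ z₂ z₃, 2*ε*n - 5 ≤ ((A₁ z₂ z₃).card : ℝ) := by
    intro z₂ z₃
    have h1 := hNc z₂ (c z₂ x₁)
    have h2 := hNc z₂ (c z₂ z₃)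
    have h3 := hinter (NB G c z₂ (c z₂ x₁)) (NB G c z₂ (c z₂ z₃))
    have h4 := hsdiff (NB G c z₂ (c z₂ x₁) ∩ NB G c z₂ (c z₂ z₃)) (insert z₃ F)
    have h5 := hins z₃ F
    simp only [hA1]
    linarith
  have hcA4 : ∀ z₂ z₃ z₁, 2*ε*n - 6 ≤ ((A₄ z₂ z₃ z₁).card : ℝ) := by
    intro z₂ z₃ z₁
    have h1 := hNc z₃ (c z₂ z₃)
    have h2 := hNc z₃ (c y₂ z₃)
    have h3 := hinter (NB G c z₃ (c z₂ z₃)) (NB G c z₃ (c y₂ z₃))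
    have h4 := hsdiff (NB G c z₃ (c z₂ z₃) ∩ NB G c z₃ (c y₂ z₃)) (insert z₁ (insert z₂ F))
    have h5 := hins z₁ (insert z₂ F)
    have h6 := hins z₂ F
    simp only [hA4]
    linarith
  set E : Finset ((_ : V) × (_ : V) × (_ : V) × V) :=
    A₂.sigma (fun z₂ => (A₃ z₂).sigma (fun z₃ =>
      (A₁ z₂ z₃).sigma (fun z₁ => A₄ z₂ z₃ z₁))) with hE
  have hEcard : E.card = ∑ z₂ ∈ A₂, ∑ z₃ ∈ A₃ z₂, ∑ z₁ ∈ A₁ z₂ z₃, (A₄ z₂ z₃ z₁).card := by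
    simp [hE, Finset.card_sigma]
  -- lower bound on E.card
  have hb4 : (0:ℝ) ≤ 5/4*(ε*n) := by nlinarith
  have h46 : 5/4*(ε*n) ≤ 2*ε*n - 6 := by nlinarith
  have h35 : 11/8*(ε*n) ≤ 2*ε*n - 5 := by nlinarith
  have hA : n/2 ≤ (1/2+ε)*n - 4 := by nlinarith
  have hElb : ε^3 * n^4 ≤ (E.card : ℝ) := by
    have hsum : (E.card : ℝ) =
        ∑ z₂ ∈ A₂, ∑ z₃ ∈ A₃ z₂, ∑ z₁ ∈ A₁ z₂ z₃, ((A₄ z₂ z₃ z₁).card : ℝ) := by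
      rw [hEcard]
      push_cast
      rfl
    rw [hsum]
    have step : (n/2) * ((11/8*(ε*n)) * ((11/8*(ε*n)) * (5/4*(ε*n)))) ≤
        ∑ z₂ ∈ A₂, ∑ z₃ ∈ A₃ z₂, ∑ z₁ ∈ A₁ z₂ z₃, ((A₄ z₂ z₃ z₁).card : ℝ) := by
      apply sum_ge_aux
      · positivity
      · linarith [hcA2]
      · intro z₂ hz₂
        apply sum_ge_aux
        · positivity
        · linarith [hcA3 z₂]
        · intro z₃ hz₃
          apply sum_ge_aux
          · positivity
          · linarith [hcA1 z₂ z₃]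
          · intro z₁ hz₁
            linarith [hcA4 z₂ z₃ z₁]
    have hkey : ε^3 * n^4 ≤ (n/2) * ((11/8*(ε*n)) * ((11/8*(ε*n)) * (5/4*(ε*n)))) := by
      have hpos : (0:ℝ) ≤ (ε*n)^3 * n := by positivity
      nlinarith [hpos]
    linarith
  -- the target finset
  set Pred : V × V × V × V → Prop := fun p =>
    (∀ v ∈ [p.1, p.2.1, p.2.2.1, p.2.2.2], v ≠ x₁ ∧ v ≠ x₂ ∧ v ≠ y₁ ∧ v ≠ y₂) ∧
    IsPCPath G c [p.1, p.2.1, p.2.2.1, p.2.2.2] ∧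
    IsPCPath G c [p.1, p.2.1, x₁, x₂] ∧
    IsPCPath G c [y₁, y₂, p.2.2.1, p.2.2.2] with hPred
  have hmaps : ∀ q ∈ E,
      (fun q : (_ : V) × (_ : V) × (_ : V) × V => (q.2.2.1, q.1, q.2.1, q.2.2.2)) q ∈
        Finset.univ.filter Pred := by
    rintro ⟨z₂, z₃, z₁, z₄⟩ hq
    rw [hE] at hq
    simp only [Finset.mem_sigma] at hq
    obtain ⟨h2, h3, h1, h4⟩ := hq
    rw [hA2] at h2
    simp only [hA3] at h3
    simp only [hA1] at h1
    simp only [hA4] at h4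
    simp only [hF, Finset.mem_sdiff, Finset.mem_inter, mem_NB, Finset.mem_insert,
      Finset.mem_singleton, not_or] at h2 h3 h1 h4
    obtain ⟨⟨hax2, hcx2⟩, hz2x1, hz2x2, hz2y1, hz2y2⟩ := h2
    obtain ⟨⟨⟨ha23, hc23⟩, hay3, hcy3⟩, hz3z2, hz3x1, hz3x2, hz3y1, hz3y2⟩ := h3
    obtain ⟨⟨⟨ha21, hc1a⟩, _, hc1b⟩, hz1z3, hz1x1, hz1x2, hz1y1, hz1y2⟩ := h1
    obtain ⟨⟨⟨ha34, hc4a⟩, _, hc4b⟩, hz4z1, hz4z2, hz4x1, hz4x2, hz4y1, hz4y2⟩ := h4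
    have hz1z2 : z₁ ≠ z₂ := ha21.ne'
    have hz3z4 : z₃ ≠ z₄ := ha34.ne
    have hcol1 : c z₁ z₂ ≠ c z₂ z₃ := by rw [hc z₁ z₂]; exact hc1b
    have hcol2 : c z₂ z₃ ≠ c z₃ z₄ := fun h => hc4a h.symm
    have hcol3 : c z₁ z₂ ≠ c z₂ x₁ := by rw [hc z₁ z₂]; exact hc1a
    have hcol4 : c z₂ x₁ ≠ c x₁ x₂ := by rw [hc z₂ x₁]; exact hcx2
    have hcol5 : c y₁ y₂ ≠ c y₂ z₃ := fun h => hcy3 h.symm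
    have hcol6 : c y₂ z₃ ≠ c z₃ z₄ := fun h => hc4b h.symm
    simp only [Finset.mem_filter, Finset.mem_univ, true_and, hPred]
    refine ⟨?_, ?_, ?_, ?_⟩
    · intro v hv
      simp only [List.mem_cons, List.not_mem_nil, or_false] at hv
      rcases hv with rfl | rfl | rfl | rfl
      · exact ⟨hz1x1, hz1x2, hz1y1, hz1y2⟩
      · exact ⟨hz2x1, hz2x2, hz2y1, hz2y2⟩
      · exact ⟨hz3x1, hz3x2, hz3y1, hz3y2⟩
      · exact ⟨hz4x1, hz4x2, hz4y1, hz4y2⟩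
    · refine ⟨?_, ?_⟩
      · simp only [List.nodup_cons, List.mem_cons, List.not_mem_nil, or_false, not_or,
          List.mem_singleton, List.nodup_nil, and_true, not_false_eq_true]
        exact ⟨⟨hz1z2, hz1z3, fun h => hz4z1 h.symm⟩, ⟨fun h => hz3z2 h.symm,
          fun h => hz4z2 h.symm⟩, hz3z4⟩
      · exact ⟨ha21.symm, hcol1, ha23, hcol2, ha34⟩
    · refine ⟨?_, ?_⟩
      · simp only [List.nodup_cons, List.mem_cons, List.not_mem_nil, or_false, not_or,
          List.mem_singleton, List.nodup_nil, and_true, not_false_eq_true]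
        exact ⟨⟨hz1z2, hz1x1, hz1x2⟩, ⟨hz2x1, hz2x2⟩, hx12⟩
      · exact ⟨ha21.symm, hcol3, hax2.symm, hcol4, hx⟩
    · refine ⟨?_, ?_⟩
      · simp only [List.nodup_cons, List.mem_cons, List.not_mem_nil, or_false, not_or,
          List.mem_singleton, List.nodup_nil, and_true, not_false_eq_true]
        exact ⟨⟨hy12, fun h => hz3y1 h.symm, fun h => hz4y1 h.symm⟩,
          ⟨fun h => hz3y2 h.symm, fun h => hz4y2 h.symm⟩, hz3z4⟩
      · exact ⟨hy, hcol5, hay3, hcol6, ha34⟩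
  have hinj : Set.InjOn
      (fun q : (_ : V) × (_ : V) × (_ : V) × V => (q.2.2.1, q.1, q.2.1, q.2.2.2)) E := by
    rintro ⟨a1, a2, a3, a4⟩ - ⟨b1, b2, b3, b4⟩ - h
    simp only [Prod.mk.injEq] at h
    obtain ⟨e3, e1, e2, e4⟩ := h
    subst e1; subst e2; subst e3; subst e4
    rfl
  have hle : E.card ≤ (Finset.univ.filter Pred).card :=
    Finset.card_le_card_of_injOn _ hmaps hinj
  have main : ε ^ 3 * n ^ 4 ≤ ((Finset.univ.filter Pred).card : ℝ) := by
    have : (E.card : ℝ) ≤ ((Finset.univ.filter Pred).card : ℝ) := by exact_mod_cast hle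
    linarith
  rw [Nat.card_eq_fintype_card, Fintype.card_subtype]
  exact main
end

section
/- Let G be an edge-coloured graph on n vertices with δ₁^c(G) ≥ 2n/3 + 1, and let x₁x₂ and y₁y₂ be edges of G with x₂ ≠ y₂. Then there exists an edge z₁z₂ with z₁, z₂ ∉ {x₁,x₂,y₁,y₂} such that both x₁x₂z₁z₂ and z₁z₂y₁y₂ are properly coloured paths; in particular, if x₁,x₂,y₁,y₂ are pairwise distinct then x₁x₂z₁z₂y₁y₂ is a properly coloured path. -/
open SimpleGraph

private lemma nodup4 {α : Type*} {a b c d : α} (h1 : a≠b) (h2 : a≠c) (h3 : a≠d)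
    (h4 : b≠c) (h5 : b≠d) (h6 : c≠d) : ([a,b,c,d]).Nodup := by simp_all

private lemma nodup6 {α : Type*} {a b c d e f : α} (h1 : a≠b) (h2 : a≠c) (h3 : a≠d)
    (h4 : a≠e) (h5 : a≠f) (h6 : b≠c) (h7 : b≠d) (h8 : b≠e) (h9 : b≠f) (h10 : c≠d)
    (h11 : c≠e) (h12 : c≠f) (h13 : d≠e) (h14 : d≠f) (h15 : e≠f) :
    ([a,b,c,d,e,f]).Nodup := by simp_all

/-- If `δ₁^c(G) ≥ 2n/3 + 1` and `x₁x₂`, `y₁y₂` are edges with `x₂ ≠ y₂`,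
then there is an edge `z₁z₂` avoiding `{x₁,x₂,y₁,y₂}` such that `x₁x₂z₁z₂` and `z₁z₂y₁y₂`
are properly coloured paths; in particular if `x₁,x₂,y₁,y₂` are pairwise distinct then
`x₁x₂z₁z₂y₁y₂` is a properly coloured path. -/
theorem stmt10 {V : Type*} [Fintype V] (G : SimpleGraph V) (c : V → V → ℕ)
    (hc : ∀ u v, c u v = c v u)
    (hδ : ∀ (v : V) (a : ℕ),
      (2 * (Fintype.card V : ℝ)) / 3 + 1 ≤ colourDeg1 G c v a)
    (x₁ x₂ y₁ y₂ : V) (hx : G.Adj x₁ x₂) (hy : G.Adj y₁ y₂) (hne : x₂ ≠ y₂) :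
    ∃ z₁ z₂ : V, G.Adj z₁ z₂ ∧
      z₁ ∉ ({x₁, x₂, y₁, y₂} : Set V) ∧ z₂ ∉ ({x₁, x₂, y₁, y₂} : Set V) ∧
      IsPCPath G c [x₁, x₂, z₁, z₂] ∧ IsPCPath G c [z₁, z₂, y₁, y₂] ∧
      (x₁ ≠ y₁ → x₁ ≠ y₂ → x₂ ≠ y₁ → IsPCPath G c [x₁, x₂, z₁, z₂, y₁, y₂]) := by
  classical
  set n : ℕ := Fintype.card V with hndef
  set δ : ℝ := (2 * (n : ℝ)) / 3 + 1 with hδdef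
  -- colour degree as Finset card
  have hcd : ∀ (v : V) (a : ℕ),
      δ ≤ ((Finset.univ.filter fun w => G.Adj v w ∧ c v w ≠ a).card : ℝ) := by
    intro v a
    have h := hδ v a
    have he : colourDeg1 G c v a
        = (Finset.univ.filter fun w => G.Adj v w ∧ c v w ≠ a).card := by
      rw [colourDeg1, Set.ncard_eq_toFinset_card']
      apply Finset.card_bij (fun a _ => a) <;> simp
    rw [he] at h
    exact h
  have hn1 : 1 ≤ n := by
    rw [hndef]; exact Fintype.card_pos_iff.mpr ⟨x₁⟩
  -- cap on monochromatic stars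
  have hcap : ∀ (v : V) (a : ℕ),
      ((Finset.univ.filter fun w => G.Adj v w ∧ c v w = a).card : ℝ)
        ≤ (n : ℝ) - 1 - δ := by
    intro v a
    have e1 : (Finset.univ.filter fun w => G.Adj v w ∧ c v w = a)
        = (Finset.univ.filter fun w => G.Adj v w).filter (fun w => c v w = a) := by
      rw [Finset.filter_filter]
    have e2 : (Finset.univ.filter fun w => G.Adj v w ∧ c v w ≠ a)
        = (Finset.univ.filter fun w => G.Adj v w).filter (fun w => ¬ (c v w = a)) := by
      rw [Finset.filter_filter]
    have hsplit := Finset.card_filter_add_card_filter_not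
      (s := Finset.univ.filter fun w => G.Adj v w) (p := fun w => c v w = a)
    rw [← e1, ← e2] at hsplit
    have hsub : (Finset.univ.filter fun w => G.Adj v w) ⊆ Finset.univ.erase v := by
      intro w hw
      simp only [Finset.mem_filter, Finset.mem_univ, true_and] at hw
      exact Finset.mem_erase.mpr ⟨hw.ne', Finset.mem_univ w⟩
    have hle := Finset.card_le_card hsub
    rw [Finset.card_erase_of_mem (Finset.mem_univ v), Finset.card_univ, ← hndef] at hle
    have hδv := hcd v a
    have hle' : ((Finset.univ.filter fun w => G.Adj v w).card : ℝ) ≤ (n : ℝ) - 1 := by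
      have h' : ((Finset.univ.filter fun w => G.Adj v w).card : ℝ) ≤ ((n - 1 : ℕ) : ℝ) := by
        exact_mod_cast hle
      rwa [Nat.cast_sub hn1, Nat.cast_one] at h'
    have hsplit' : ((Finset.univ.filter fun w => G.Adj v w ∧ c v w = a).card : ℝ)
        + ((Finset.univ.filter fun w => G.Adj v w ∧ c v w ≠ a).card : ℝ)
        = ((Finset.univ.filter fun w => G.Adj v w).card : ℝ) := by
      exact_mod_cast hsplit
    linarith
  -- intersection bound
  have hint : ∀ s t : Finset V, (s.card : ℝ) + t.card - (n : ℝ) ≤ ((s ∩ t).card : ℝ) := by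
    intro s t
    have h1 : ((s ∩ t).card : ℝ) + (s ∪ t).card = s.card + t.card := by
      exact_mod_cast Finset.card_inter_add_card_union s t
    have h2 : ((s ∪ t).card : ℝ) ≤ (n : ℝ) := by
      have h' := Finset.card_le_univ (s ∪ t)
      rw [← hndef] at h'
      exact_mod_cast h'
    linarith
  -- KEY existence of the middle edge
  have key : ∃ z₁ z₂ : V,
      (G.Adj x₂ z₁ ∧ c x₂ z₁ ≠ c x₁ x₂ ∧ z₁ ≠ x₁ ∧ z₁ ≠ y₁ ∧ z₁ ≠ y₂) ∧
      (G.Adj y₁ z₂ ∧ c y₁ z₂ ≠ c y₁ y₂ ∧ z₂ ≠ x₁ ∧ z₂ ≠ x₂ ∧ z₂ ≠ y₂) ∧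
      G.Adj z₁ z₂ ∧ c z₁ z₂ ≠ c z₁ x₂ ∧ c z₁ z₂ ≠ c z₂ y₁ := by
    by_contra hcon
    push_neg at hcon
    -- hcon : ∀ z₁ z₂, ¬ (...)  (after push_neg it becomes implications; we handle via simp)
    set A : Finset V := Finset.univ.filter
      (fun z => G.Adj x₂ z ∧ c x₂ z ≠ c x₁ x₂ ∧ z ≠ x₁ ∧ z ≠ y₁ ∧ z ≠ y₂) with hAdef
    set B : Finset V := Finset.univ.filter
      (fun z => G.Adj y₁ z ∧ c y₁ z ≠ c y₁ y₂ ∧ z ≠ x₁ ∧ z ≠ x₂ ∧ z ≠ y₂) with hBdef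
    have hbad : ∀ z₁ ∈ A, ∀ z₂ ∈ B, G.Adj z₁ z₂ →
        c z₁ z₂ = c z₁ x₂ ∨ c z₁ z₂ = c z₂ y₁ := by
      intro z₁ hz₁ z₂ hz₂ hadj
      rw [hAdef, Finset.mem_filter] at hz₁
      rw [hBdef, Finset.mem_filter] at hz₂
      by_cases hq : c z₁ z₂ = c z₁ x₂
      · exact Or.inl hq
      · exact Or.inr (hcon z₁ z₂ hz₁.2 hz₂.2 hadj hq)
    -- lower bounds on |A| and |B|
    have hA3 : δ - 3 ≤ (A.card : ℝ) := by
      have hs : (Finset.univ.filter fun w => G.Adj x₂ w ∧ c x₂ w ≠ c x₁ x₂)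
          ⊆ A ∪ {x₁, y₁, y₂} := by
        intro z hz
        simp only [Finset.mem_filter, Finset.mem_univ, true_and] at hz
        by_cases h1 : z = x₁; · simp [h1]
        by_cases h2 : z = y₁; · simp [h2]
        by_cases h3 : z = y₂; · simp [h3]
        refine Finset.mem_union_left _ ?_
        rw [hAdef]; simp [hz.1, hz.2, h1, h2, h3]
      have h1 := Finset.card_le_card hs
      have h2 := Finset.card_union_le A ({x₁, y₁, y₂} : Finset V)
      have h3 : ({x₁, y₁, y₂} : Finset V).card ≤ 3 := by
        have := Finset.card_insert_le x₁ ({y₁, y₂} : Finset V)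
        have := Finset.card_insert_le y₁ ({y₂} : Finset V)
        simp at *
        omega
      have h4 := hcd x₂ (c x₁ x₂)
      have h5 : ((Finset.univ.filter fun w => G.Adj x₂ w ∧ c x₂ w ≠ c x₁ x₂).card : ℝ)
          ≤ (A.card : ℝ) + 3 := by
        have : (Finset.univ.filter fun w => G.Adj x₂ w ∧ c x₂ w ≠ c x₁ x₂).card
            ≤ A.card + 3 := le_trans h1 (le_trans h2 (by omega))
        exact_mod_cast this
      linarith
    have hB3 : δ - 3 ≤ (B.card : ℝ) := by
      have hs : (Finset.univ.filter fun w => G.Adj y₁ w ∧ c y₁ w ≠ c y₁ y₂)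
          ⊆ B ∪ {x₁, x₂, y₂} := by
        intro z hz
        simp only [Finset.mem_filter, Finset.mem_univ, true_and] at hz
        by_cases h1 : z = x₁; · simp [h1]
        by_cases h2 : z = x₂; · simp [h2]
        by_cases h3 : z = y₂; · simp [h3]
        refine Finset.mem_union_left _ ?_
        rw [hBdef]; simp [hz.1, hz.2, h1, h2, h3]
      have h1 := Finset.card_le_card hs
      have h2 := Finset.card_union_le B ({x₁, x₂, y₂} : Finset V)
      have h3 : ({x₁, x₂, y₂} : Finset V).card ≤ 3 := by
        have := Finset.card_insert_le x₁ ({x₂, y₂} : Finset V)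
        have := Finset.card_insert_le x₂ ({y₂} : Finset V)
        simp at *
        omega
      have h4 := hcd y₁ (c y₁ y₂)
      have h5 : ((Finset.univ.filter fun w => G.Adj y₁ w ∧ c y₁ w ≠ c y₁ y₂).card : ℝ)
          ≤ (B.card : ℝ) + 3 := by
        have : (Finset.univ.filter fun w => G.Adj y₁ w ∧ c y₁ w ≠ c y₁ y₂).card
            ≤ B.card + 3 := le_trans h1 (le_trans h2 (by omega))
        exact_mod_cast this
      linarith
    -- two double counts
    -- R2 pairs: z₁ z₂ adjacent with c z₁ z₂ = c z₂ y₁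
    have swap2 : (∑ z ∈ A, (B.filter fun w => G.Adj z w ∧ c z w = c w y₁).card)
        = ∑ w ∈ B, (A.filter fun z => G.Adj z w ∧ c z w = c w y₁).card := by
      simp only [Finset.card_filter]
      rw [Finset.sum_comm]
    have swap1 : (∑ z ∈ A, (B.filter fun w => G.Adj z w ∧ c z w = c z x₂).card)
        = ∑ w ∈ B, (A.filter fun z => G.Adj z w ∧ c z w = c z x₂).card := by
      simp only [Finset.card_filter]
      rw [Finset.sum_comm]
    -- lower bound per z₁ ∈ A for R2 fibers
    have low2 : ∀ z₁ ∈ A,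
        δ + (B.card : ℝ) - (n : ℝ) ≤ ((B.filter fun w => G.Adj z₁ w ∧ c z₁ w = c w y₁).card : ℝ) := by
      intro z₁ hz₁
      have hz₁' := hz₁
      rw [hAdef, Finset.mem_filter] at hz₁'
      have hsub : (Finset.univ.filter fun w => G.Adj z₁ w ∧ c z₁ w ≠ c z₁ x₂) ∩ B
          ⊆ B.filter fun w => G.Adj z₁ w ∧ c z₁ w = c w y₁ := by
        intro w hw
        rw [Finset.mem_inter, Finset.mem_filter] at hw
        obtain ⟨⟨-, hadj, hcol⟩, hwB⟩ := hw
        refine Finset.mem_filter.mpr ⟨hwB, hadj, ?_⟩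
        rcases hbad z₁ hz₁ w hwB hadj with h | h
        · exact absurd h hcol
        · exact h
      have hle := Finset.card_le_card hsub
      have hle' : (((Finset.univ.filter fun w => G.Adj z₁ w ∧ c z₁ w ≠ c z₁ x₂) ∩ B).card : ℝ)
          ≤ ((B.filter fun w => G.Adj z₁ w ∧ c z₁ w = c w y₁).card : ℝ) := by exact_mod_cast hle
      have h1 := hint (Finset.univ.filter fun w => G.Adj z₁ w ∧ c z₁ w ≠ c z₁ x₂) B
      have h2 := hcd z₁ (c z₁ x₂)
      linarith
    -- upper bound per z₂ ∈ B for R2 fibers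
    have up2 : ∀ z₂ ∈ B,
        ((A.filter fun z => G.Adj z z₂ ∧ c z z₂ = c z₂ y₁).card : ℝ) ≤ (n : ℝ) - 1 - δ := by
      intro z₂ _
      have hsub : (A.filter fun z => G.Adj z z₂ ∧ c z z₂ = c z₂ y₁)
          ⊆ Finset.univ.filter fun w => G.Adj z₂ w ∧ c z₂ w = c z₂ y₁ := by
        intro z hz
        rw [Finset.mem_filter] at hz
        refine Finset.mem_filter.mpr ⟨Finset.mem_univ _, hz.2.1.symm, ?_⟩
        rw [hc z₂ z]
        exact hz.2.2
      have hle : ((A.filter fun z => G.Adj z z₂ ∧ c z z₂ = c z₂ y₁).card : ℝ)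
          ≤ ((Finset.univ.filter fun w => G.Adj z₂ w ∧ c z₂ w = c z₂ y₁).card : ℝ) := by
        exact_mod_cast Finset.card_le_card hsub
      have := hcap z₂ (c z₂ y₁)
      linarith
    -- lower bound per z₂ ∈ B for R1 fibers
    have low1 : ∀ z₂ ∈ B,
        δ + (A.card : ℝ) - (n : ℝ) ≤ ((A.filter fun z => G.Adj z z₂ ∧ c z z₂ = c z x₂).card : ℝ) := by
      intro z₂ hz₂
      have hsub : (Finset.univ.filter fun w => G.Adj z₂ w ∧ c z₂ w ≠ c z₂ y₁) ∩ A
          ⊆ A.filter fun z => G.Adj z z₂ ∧ c z z₂ = c z x₂ := by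
        intro z hz
        rw [Finset.mem_inter, Finset.mem_filter] at hz
        obtain ⟨⟨-, hadj, hcol⟩, hzA⟩ := hz
        refine Finset.mem_filter.mpr ⟨hzA, hadj.symm, ?_⟩
        rcases hbad z hzA z₂ hz₂ hadj.symm with h | h
        · exact h
        · exact absurd ((hc z₂ z).trans h) hcol
      have hle : (((Finset.univ.filter fun w => G.Adj z₂ w ∧ c z₂ w ≠ c z₂ y₁) ∩ A).card : ℝ)
          ≤ ((A.filter fun z => G.Adj z z₂ ∧ c z z₂ = c z x₂).card : ℝ) := by
        exact_mod_cast Finset.card_le_card hsub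
      have h1 := hint (Finset.univ.filter fun w => G.Adj z₂ w ∧ c z₂ w ≠ c z₂ y₁) A
      have h2 := hcd z₂ (c z₂ y₁)
      linarith
    -- upper bound per z₁ ∈ A for R1 fibers
    have up1 : ∀ z₁ ∈ A,
        ((B.filter fun w => G.Adj z₁ w ∧ c z₁ w = c z₁ x₂).card : ℝ) ≤ (n : ℝ) - 1 - δ := by
      intro z₁ _
      have hsub : (B.filter fun w => G.Adj z₁ w ∧ c z₁ w = c z₁ x₂)
          ⊆ Finset.univ.filter fun w => G.Adj z₁ w ∧ c z₁ w = c z₁ x₂ := by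
        intro w hw
        rw [Finset.mem_filter] at hw
        exact Finset.mem_filter.mpr ⟨Finset.mem_univ _, hw.2⟩
      have hle : ((B.filter fun w => G.Adj z₁ w ∧ c z₁ w = c z₁ x₂).card : ℝ)
          ≤ ((Finset.univ.filter fun w => G.Adj z₁ w ∧ c z₁ w = c z₁ x₂).card : ℝ) := by
        exact_mod_cast Finset.card_le_card hsub
      have := hcap z₁ (c z₁ x₂)
      linarith
    -- assemble sums
    have sum2lo : (A.card : ℝ) * (δ + (B.card : ℝ) - (n : ℝ))
        ≤ ∑ z ∈ A, ((B.filter fun w => G.Adj z w ∧ c z w = c w y₁).card : ℝ) := by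
      have := Finset.card_nsmul_le_sum A
        (fun z => ((B.filter fun w => G.Adj z w ∧ c z w = c w y₁).card : ℝ))
        (δ + (B.card : ℝ) - (n : ℝ)) low2
      simpa [nsmul_eq_mul] using this
    have sum2hi : (∑ w ∈ B, ((A.filter fun z => G.Adj z w ∧ c z w = c w y₁).card : ℝ))
        ≤ (B.card : ℝ) * ((n : ℝ) - 1 - δ) := by
      have := Finset.sum_le_card_nsmul B
        (fun w => ((A.filter fun z => G.Adj z w ∧ c z w = c w y₁).card : ℝ))
        ((n : ℝ) - 1 - δ) up2
      simpa [nsmul_eq_mul] using this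
    have sum1lo : (B.card : ℝ) * (δ + (A.card : ℝ) - (n : ℝ))
        ≤ ∑ w ∈ B, ((A.filter fun z => G.Adj z w ∧ c z w = c z x₂).card : ℝ) := by
      have := Finset.card_nsmul_le_sum B
        (fun w => ((A.filter fun z => G.Adj z w ∧ c z w = c z x₂).card : ℝ))
        (δ + (A.card : ℝ) - (n : ℝ)) low1
      simpa [nsmul_eq_mul] using this
    have sum1hi : (∑ z ∈ A, ((B.filter fun w => G.Adj z w ∧ c z w = c z x₂).card : ℝ))
        ≤ (A.card : ℝ) * ((n : ℝ) - 1 - δ) := by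
      have := Finset.sum_le_card_nsmul A
        (fun z => ((B.filter fun w => G.Adj z w ∧ c z w = c z x₂).card : ℝ))
        ((n : ℝ) - 1 - δ) up1
      simpa [nsmul_eq_mul] using this
    have swap2' : (∑ z ∈ A, ((B.filter fun w => G.Adj z w ∧ c z w = c w y₁).card : ℝ))
        = ∑ w ∈ B, ((A.filter fun z => G.Adj z w ∧ c z w = c w y₁).card : ℝ) := by
      exact_mod_cast congrArg (Nat.cast : ℕ → ℝ) swap2
    have swap1' : (∑ z ∈ A, ((B.filter fun w => G.Adj z w ∧ c z w = c z x₂).card : ℝ))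
        = ∑ w ∈ B, ((A.filter fun z => G.Adj z w ∧ c z w = c z x₂).card : ℝ) := by
      exact_mod_cast congrArg (Nat.cast : ℕ → ℝ) swap1
    -- n ≥ 6 : from hcap nonneg-ness applied at x₁
    have hn6 : 0 ≤ (n : ℝ) - 1 - δ := by
      have h0 : (0 : ℝ) ≤ ((Finset.univ.filter fun w => G.Adj x₁ w ∧ c x₁ w = 0).card : ℝ) :=
        Nat.cast_nonneg _
      have h1 := hcap x₁ 0
      -- this only gives card ≤ n-1-δ; need some set... use hcap with the empty-possible set: still fine
      linarith
    have ha0 : (0 : ℝ) ≤ (A.card : ℝ) := Nat.cast_nonneg _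
    have hb0 : (0 : ℝ) ≤ (B.card : ℝ) := Nat.cast_nonneg _
    have e2 : (A.card : ℝ) * (δ + (B.card : ℝ) - (n : ℝ)) ≤ (B.card : ℝ) * ((n : ℝ) - 1 - δ) := by
      calc (A.card : ℝ) * (δ + (B.card : ℝ) - (n : ℝ))
          ≤ ∑ z ∈ A, ((B.filter fun w => G.Adj z w ∧ c z w = c w y₁).card : ℝ) := sum2lo
        _ = _ := swap2'
        _ ≤ _ := sum2hi
    have e1 : (B.card : ℝ) * (δ + (A.card : ℝ) - (n : ℝ)) ≤ (A.card : ℝ) * ((n : ℝ) - 1 - δ) := by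
      calc (B.card : ℝ) * (δ + (A.card : ℝ) - (n : ℝ))
          ≤ ∑ w ∈ B, ((A.filter fun z => G.Adj z w ∧ c z w = c z x₂).card : ℝ) := sum1lo
        _ = ∑ z ∈ A, ((B.filter fun w => G.Adj z w ∧ c z w = c z x₂).card : ℝ) := swap1'.symm
        _ ≤ _ := sum1hi
    -- final contradiction
    have hδn : δ = (2 * (n : ℝ)) / 3 + 1 := hδdef
    rw [hδn] at e1 e2 hA3 hB3 hn6
    have p1 : (0 : ℝ) ≤ ((A.card : ℝ) - ((2 * (n : ℝ)) / 3 + 1 - 3)) * (B.card : ℝ) :=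
      mul_nonneg (by linarith) hb0
    have p2 : (0 : ℝ) ≤ ((B.card : ℝ) - ((2 * (n : ℝ)) / 3 + 1 - 3)) * (A.card : ℝ) :=
      mul_nonneg (by linarith) ha0
    nlinarith [p1, p2]
  -- construct the conclusion
  obtain ⟨z₁, z₂, ⟨ha1, ha2, ha3, ha4, ha5⟩, ⟨hb1, hb2, hb3, hb4, hb5⟩, hadj, hc1, hc2⟩ := key
  have hz₁x₂ : z₁ ≠ x₂ := ha1.ne'
  have hz₂y₁ : z₂ ≠ y₁ := hb1.ne'
  have hz₁z₂ : z₁ ≠ z₂ := hadj.ne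
  have hx₁x₂ : x₁ ≠ x₂ := hx.ne
  have hy₁y₂ : y₁ ≠ y₂ := hy.ne
  refine ⟨z₁, z₂, hadj, ?_, ?_, ?_, ?_, ?_⟩
  · simp only [Set.mem_insert_iff, Set.mem_singleton_iff]
    push_neg
    exact ⟨ha3, hz₁x₂, ha4, ha5⟩
  · simp only [Set.mem_insert_iff, Set.mem_singleton_iff]
    push_neg
    exact ⟨hb3, hb4, hz₂y₁, hb5⟩
  · constructor
    · exact nodup4 hx₁x₂ ha3.symm hb3.symm hz₁x₂.symm hb4.symm hz₁z₂
    · refine ⟨hx, ?_, ha1, ?_, hadj⟩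
      · exact fun h => ha2 h.symm
      · exact fun h => hc1 (h.symm.trans (hc x₂ z₁))
  · constructor
    · exact nodup4 hz₁z₂ ha4 ha5 hz₂y₁ hb5 hy₁y₂
    · refine ⟨hadj, hc2, hb1.symm, ?_, hy⟩
      · exact fun h => hb2 ((hc y₁ z₂).trans h)
  · intro h1 h2 h3
    constructor
    · exact nodup6 hx₁x₂ ha3.symm hb3.symm h1 h2 hz₁x₂.symm hb4.symm h3 hne
        hz₁z₂ ha4 ha5 hz₂y₁ hb5 hy₁y₂
    · refine ⟨hx, ?_, ha1, ?_, hadj, hc2, hb1.symm, ?_, hy⟩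
      · exact fun h => ha2 h.symm
      · exact fun h => hc1 (h.symm.trans (hc x₂ z₁))
      · exact fun h => hb2 ((hc y₁ z₂).trans h)
end

section
/- Let G be an edge-coloured graph that is edge-minimal subject to preserving all colour degrees, i.e. deleting any edge decreases d^c(v) for some vertex v. Then every monochromatic subgraph of G (the subgraph formed by all edges of a fixed colour) is a vertex-disjoint union of stars. -/
open SimpleGraph

/-! An edge `uv` of colour `a` at which both endpoints see `a` on a second edge is redundant:
after deleting it, `u` and `v` still see `a` on those other edges, and no other vertex loses an
edge. Minimality forbids redundant edges, and a graph in which every edge has an endpoint of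
degree one is a disjoint union of stars. -/

section

variable {V : Type*} {G : SimpleGraph V} {c : V → V → ℕ}

lemma mem_colours_deleteEdges {x y w : V} (hw : G.Adj x w) (hwy : w ≠ y) :
    c x w ∈ c x '' {z | (G.deleteEdges {s(x, y)}).Adj x z} :=
  ⟨w, (deleteEdges_adj ..).2 ⟨hw, by simp [hwy, hw.ne']⟩, rfl⟩

lemma colourDeg_deleteEdges_eq {u v : V} (hu : ∃ w ≠ v, G.Adj u w ∧ c u w = c u v)
    (hv : ∃ w ≠ u, G.Adj v w ∧ c v w = c v u) (x : V) :
    colourDeg (G.deleteEdges {s(u, v)}) c x = colourDeg G c x := by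
  rw [colourDeg, colourDeg]
  congr 1
  refine (Set.image_mono fun y hy => G.deleteEdges_le _ hy).antisymm ?_
  rintro _ ⟨y, hxy, rfl⟩
  by_cases hedge : s(x, y) = s(u, v)
  · rcases Sym2.eq_iff.1 hedge with ⟨rfl, rfl⟩ | ⟨rfl, rfl⟩
    · obtain ⟨w, hwy, hw, hcw⟩ := hu
      exact hcw ▸ mem_colours_deleteEdges hw hwy
    · obtain ⟨w, hwy, hw, hcw⟩ := hv
      rw [Sym2.eq_swap]
      exact hcw ▸ mem_colours_deleteEdges hw hwy
  · exact ⟨y, (deleteEdges_adj ..).2 ⟨hxy, hedge⟩, rfl⟩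

lemma colourDeg_deleteEdges_eq_of_one_lt_ncard (hc : ∀ u v, c u v = c v u) {u v : V}
    (hu : 1 < {w | G.Adj u w ∧ c u w = c u v}.ncard)
    (hv : 1 < {w | G.Adj v w ∧ c v w = c u v}.ncard) (x : V) :
    colourDeg (G.deleteEdges {s(u, v)}) c x = colourDeg G c x := by
  obtain ⟨w, ⟨hw, hcw⟩, hwv⟩ := Set.exists_ne_of_one_lt_ncard hu v
  obtain ⟨w', ⟨hw', hcw'⟩, hw'u⟩ := Set.exists_ne_of_one_lt_ncard hv u
  exact colourDeg_deleteEdges_eq ⟨w, hwv, hw, hcw⟩ ⟨w', hw'u, hw', hcw'.trans (hc u v)⟩ x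

end

theorem stmt12_general {V : Type*} (G : SimpleGraph V) (c : V → V → ℕ)
    (hc : ∀ u v, c u v = c v u)
    (hmin : ∀ u v : V, G.Adj u v →
      ∃ w : V, colourDeg (G.deleteEdges {s(u, v)}) c w < colourDeg G c w) :
    ∀ (a : ℕ) (u v : V), G.Adj u v → c u v = a →
      ({w | G.Adj u w ∧ c u w = a} : Set V).ncard ≤ 1 ∨
      ({w | G.Adj v w ∧ c v w = a} : Set V).ncard ≤ 1 := by
  rintro _ u v huv rfl
  by_contra! hboth
  obtain ⟨x, hx⟩ := hmin u v huv
  exact hx.ne (colourDeg_deleteEdges_eq_of_one_lt_ncard hc hboth.1 hboth.2 x)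

/-- If `G` is edge-minimal subject to preserving all colour degrees (deleting
any edge strictly decreases the colour degree of some vertex), then every monochromatic
subgraph of `G` is a vertex-disjoint union of stars: for every edge `uv` of colour `a`, one of
its endpoints has only one incident edge of colour `a`. -/
theorem stmt12 {V : Type*} [Fintype V] [DecidableEq V] (G : SimpleGraph V) (c : V → V → ℕ)
    (hc : ∀ u v, c u v = c v u)
    (hmin : ∀ u v : V, G.Adj u v →
      ∃ w : V, colourDeg (G.deleteEdges {s(u, v)}) c w < colourDeg G c w) :
    ∀ (a : ℕ) (u v : V), G.Adj u v → c u v = a →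
      ({w | G.Adj u w ∧ c u w = a} : Set V).ncard ≤ 1 ∨
      ({w | G.Adj v w ∧ c v w = a} : Set V).ncard ≤ 1 :=
  stmt12_general G c hc hmin
end

section
/- Let 0 < γ < 1. There exists n₀ such that for all n ≥ n₀ the following holds. Let G be an edge-coloured graph on n vertices such that |L(x)| ≥ γn⁴ for every vertex x and |L(x₁,x₂;y₁,y₂)| ≥ γn⁴ for all distinct vertices x₁,x₂,y₁,y₂ with x₁x₂, y₁y₂ ∈ E(G). Then there exists a family F' of pairwise vertex-disjoint properly coloured paths of length 3 with |F'| ≤ 2⁻⁶γn, |L(x) ∩ F'| ≥ 2⁻⁹γ²n for every vertex x, and |L(x₁,x₂;y₁,y₂) ∩ F'| ≥ 2⁻⁹γ²n for all such quadruples. -/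
open SimpleGraph

/-- The set of absorbing paths for the vertex `x`: properly coloured paths `z₁z₂z₃z₄`
avoiding `x` such that `z₁z₂xz₃z₄` is also properly coloured. -/
def Labs {V : Type*} (G : SimpleGraph V) (c : V → V → ℕ) (x : V) : Set (V × V × V × V) :=
  {p | p.1 ≠ x ∧ p.2.1 ≠ x ∧ p.2.2.1 ≠ x ∧ p.2.2.2 ≠ x ∧
    IsPCPath G c [p.1, p.2.1, p.2.2.1, p.2.2.2] ∧
    IsPCPath G c [p.1, p.2.1, x, p.2.2.1, p.2.2.2]}

/-- The set of absorbing paths for the ordered pair of edges `(x₁,x₂; y₁,y₂)`. -/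
def LabsE {V : Type*} (G : SimpleGraph V) (c : V → V → ℕ) (x₁ x₂ y₁ y₂ : V) :
    Set (V × V × V × V) :=
  {p | (∀ v ∈ [p.1, p.2.1, p.2.2.1, p.2.2.2], v ≠ x₁ ∧ v ≠ x₂ ∧ v ≠ y₁ ∧ v ≠ y₂) ∧
    IsPCPath G c [p.1, p.2.1, p.2.2.1, p.2.2.2] ∧
    IsPCPath G c [p.1, p.2.1, x₁, x₂] ∧
    IsPCPath G c [y₁, y₂, p.2.2.1, p.2.2.2]}


/-!
Greedy absorber selection via the method of conditional expectations. For a family `F` of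
paths and a target set `S`, the weight `exp (-|F ∩ S|)` drops by a factor `e⁻¹ ≤ 1/2` whenever a
path of `S` is added. Every target contains at least `γn⁴` paths and, while `|F| ≤ γn/64`, at
most `γn⁴/4` of them meet `F`; so a uniformly random quadruple, added whenever it is a properly
coloured path disjoint from `F`, decreases the expected total weight by a factor `1 - 3γ/8`.
Fixing at each step a quadruple that does at least as well as the average and running
`⌊γn/64⌋` steps, the total weight over the `≤ 2n⁴` targets drops below `exp (-γ²n/512)`, which
bounds every single weight and hence forces `|F ∩ S| ≥ γ²n/512` for every target `S`.
-/

open Finset Real Filter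

namespace AbsorbingPaths

lemma exp_neg_one_le_half : exp (-1 : ℝ) ≤ 1 / 2 := by
  rw [exp_neg, one_div]
  exact inv_anti₀ two_pos (by linarith [add_one_le_exp (1 : ℝ)])

section Greedy

variable {α : Type*} [DecidableEq α]

noncomputable def expPotential (𝒮 : Finset (Finset α)) (F : Finset α) : ℝ :=
  ∑ S ∈ 𝒮, exp (-(#(F ∩ S) : ℝ))

lemma expPotential_nonneg (𝒮 : Finset (Finset α)) (F : Finset α) : 0 ≤ expPotential 𝒮 F :=
  sum_nonneg fun _ _ => (exp_pos _).le

lemma exp_neg_card_inter_le_expPotential {𝒮 : Finset (Finset α)} {S : Finset α} (hS : S ∈ 𝒮)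
    (F : Finset α) : exp (-(#(F ∩ S) : ℝ)) ≤ expPotential 𝒮 F :=
  single_le_sum (f := fun S => exp (-(#(F ∩ S) : ℝ))) (fun _ _ => (exp_pos _).le) hS

def extendBy (A F : Finset α) (q : α) : Finset α :=
  if q ∈ A then insert q F else F

lemma card_extendBy_le (A F : Finset α) (q : α) : #(extendBy A F q) ≤ #F + 1 := by
  unfold extendBy
  split_ifs
  exacts [card_insert_le _ _, Nat.le_succ _]

lemma sum_exp_neg_card_extendBy_inter_le [Fintype α] {A F : Finset α} (hAF : Disjoint A F)
    (S : Finset α) :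
    ∑ q, exp (-(#(extendBy A F q ∩ S) : ℝ)) ≤
      (Fintype.card α - #(A ∩ S) / 2) * exp (-(#(F ∩ S) : ℝ)) := by
  have hgain : ∀ q ∈ A ∩ S,
      exp (-(#(extendBy A F q ∩ S) : ℝ)) = exp (-1) * exp (-(#(F ∩ S) : ℝ)) := by
    intro q hq
    obtain ⟨hqA, hqS⟩ := mem_inter.1 hq
    have hqF : q ∉ F ∩ S := fun h => disjoint_left.1 hAF hqA (mem_inter.1 h).1
    rw [extendBy, if_pos hqA, insert_inter_of_mem hqS, card_insert_of_notMem hqF, ← exp_add]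
    push_cast
    ring_nf
  have hmono : ∀ q, exp (-(#(extendBy A F q ∩ S) : ℝ)) ≤ exp (-(#(F ∩ S) : ℝ)) := by
    intro q
    have : F ⊆ extendBy A F q := by
      unfold extendBy
      split_ifs
      exacts [subset_insert _ _, Subset.rfl]
    gcongr
  have hcard : ((#(A ∩ S) : ℝ) + #(A ∩ S)ᶜ) * exp (-(#(F ∩ S) : ℝ)) =
      Fintype.card α * exp (-(#(F ∩ S) : ℝ)) := by
    exact_mod_cast congrArg (fun n : ℕ => (n : ℝ) * exp (-(#(F ∩ S) : ℝ)))
      (card_add_card_compl (A ∩ S))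
  have hsplit := sum_add_sum_compl (A ∩ S) fun q => exp (-(#(extendBy A F q ∩ S) : ℝ))
  rw [← hsplit, sum_congr rfl hgain, sum_const, nsmul_eq_mul]
  have hrest := sum_le_card_nsmul (A ∩ S)ᶜ _ _ fun q _ => hmono q
  rw [nsmul_eq_mul] at hrest
  have hhalf : 0 ≤ (1 / 2 - exp (-1)) * #(A ∩ S) * exp (-(#(F ∩ S) : ℝ)) := by
    have := exp_neg_one_le_half
    positivity
  nlinarith

lemma exists_expPotential_extendBy_le [Fintype α] [Nonempty α] (𝒮 : Finset (Finset α))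
    {A F : Finset α} (hAF : Disjoint A F) {β : ℝ} (hA : ∀ S ∈ 𝒮, β * Fintype.card α ≤ #(A ∩ S)) :
    ∃ q, expPotential 𝒮 (extendBy A F q) ≤ (1 - β / 2) * expPotential 𝒮 F := by
  suffices h : ∑ q, expPotential 𝒮 (extendBy A F q) ≤
      ∑ _q : α, (1 - β / 2) * expPotential 𝒮 F by
    obtain ⟨q, -, hq⟩ := exists_le_of_sum_le univ_nonempty h
    exact ⟨q, hq⟩
  simp only [expPotential, sum_const, card_univ, nsmul_eq_mul, mul_sum]
  rw [sum_comm]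
  refine sum_le_sum fun S hS => (sum_exp_neg_card_extendBy_inter_le hAF S).trans ?_
  rw [← mul_assoc]
  gcongr
  linarith [hA S hS]

theorem exists_expPotential_le [Fintype α] [Nonempty α] (𝒮 : Finset (Finset α))
    (P : Finset α → Prop) (avail : Finset α → Finset α) (hP₀ : P ∅)
    (hP : ∀ F, P F → ∀ q ∈ avail F, P (insert q F))
    (havail : ∀ F, Disjoint (avail F) F) (β : ℝ) (m : ℕ)
    (hdense : ∀ F, P F → #F < m → ∀ S ∈ 𝒮, β * Fintype.card α ≤ #(avail F ∩ S)) :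
    ∃ F, P F ∧ #F ≤ m ∧ expPotential 𝒮 F ≤ #𝒮 * exp (-(β / 2 * m)) := by
  suffices h : ∀ t ≤ m, ∃ F, P F ∧ #F ≤ t ∧ expPotential 𝒮 F ≤ #𝒮 * exp (-(β / 2 * t)) from
    h m le_rfl
  intro t ht
  induction t with
  | zero => exact ⟨∅, hP₀, le_rfl, by simp [expPotential]⟩
  | succ t ih =>
    obtain ⟨F, hPF, hFt, hFpot⟩ := ih (by omega)
    obtain ⟨q, hq⟩ := exists_expPotential_extendBy_le 𝒮 (havail F) (hdense F hPF (by omega))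
    refine ⟨extendBy (avail F) F q, ?_, (card_extendBy_le _ _ _).trans (by omega), ?_⟩
    · unfold extendBy
      split_ifs with hqF
      exacts [hP F hPF q hqF, hPF]
    · calc expPotential 𝒮 (extendBy (avail F) F q)
          ≤ (1 - β / 2) * expPotential 𝒮 F := hq
        _ ≤ exp (-(β / 2)) * expPotential 𝒮 F := by
          gcongr
          · exact expPotential_nonneg 𝒮 F
          · linarith [add_one_le_exp (-(β / 2))]
        _ ≤ exp (-(β / 2)) * (#𝒮 * exp (-(β / 2 * t))) := by gcongr
        _ = #𝒮 * exp (-(β / 2 * (t + 1 : ℕ))) := by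
          rw [mul_left_comm, ← exp_add]
          push_cast
          ring_nf

end Greedy

section Quadruples

variable {V : Type*} [Fintype V] [DecidableEq V]

def quadVerts (p : V × V × V × V) : List V := [p.1, p.2.1, p.2.2.1, p.2.2.2]

lemma card_filter_mem_quadVerts_le (v : V) :
    #{q : V × V × V × V | v ∈ quadVerts q} ≤ 4 * Fintype.card V ^ 3 := by
  have hsub : ({q | v ∈ quadVerts q} : Finset (V × V × V × V)) ⊆
      ({v} ×ˢ univ ∪ univ ×ˢ {v} ×ˢ univ) ∪
        (univ ×ˢ univ ×ˢ {v} ×ˢ univ ∪ univ ×ˢ univ ×ˢ univ ×ˢ {v}) := by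
    intro q
    simp only [quadVerts, mem_filter, mem_univ, true_and, List.mem_cons, List.not_mem_nil,
      or_false]
    rintro (h | h | h | h) <;> simp [h]
  refine (card_le_card hsub).trans ((card_union_le _ _).trans
    ((add_le_add (card_union_le _ _) (card_union_le _ _)).trans (le_of_eq ?_)))
  simp only [card_product, card_singleton, card_univ, Fintype.card_prod]
  ring

lemma card_filter_meets_le (F : Finset (V × V × V × V)) :
    #{q : V × V × V × V | ∃ p ∈ F, ∃ v ∈ quadVerts q, v ∈ quadVerts p} ≤
      16 * #F * Fintype.card V ^ 3 := by
  set U := F.biUnion fun p => (quadVerts p).toFinset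
  have hU : #U ≤ #F * 4 :=
    card_biUnion_le_card_mul _ _ _ fun p _ => (List.toFinset_card_le _).trans le_rfl
  have hsub : ({q | ∃ p ∈ F, ∃ v ∈ quadVerts q, v ∈ quadVerts p} : Finset (V × V × V × V)) ⊆
      U.biUnion fun v => {q | v ∈ quadVerts q} := by
    intro q
    simp only [U, mem_filter, mem_univ, true_and, mem_biUnion, List.mem_toFinset]
    rintro ⟨p, hp, v, hvq, hvp⟩
    exact ⟨v, ⟨p, hp, hvp⟩, hvq⟩
  calc _ ≤ #U * (4 * Fintype.card V ^ 3) :=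
        (card_le_card hsub).trans
          (card_biUnion_le_card_mul _ _ _ fun v _ => card_filter_mem_quadVerts_le v)
    _ ≤ #F * 4 * (4 * Fintype.card V ^ 3) := by gcongr
    _ = 16 * #F * Fintype.card V ^ 3 := by ring

def IsDisjointPCFamily (G : SimpleGraph V) (c : V → V → ℕ) (F : Finset (V × V × V × V)) :
    Prop :=
  (∀ p ∈ F, IsPCPath G c (quadVerts p)) ∧
    ∀ p ∈ F, ∀ q ∈ F, p ≠ q → ∀ v ∈ quadVerts p, v ∉ quadVerts q

open Classical in
noncomputable def freeQuads (G : SimpleGraph V) (c : V → V → ℕ) (F : Finset (V × V × V × V)) :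
    Finset (V × V × V × V) :=
  {q | IsPCPath G c (quadVerts q) ∧ ∀ p ∈ F, ∀ v ∈ quadVerts q, v ∉ quadVerts p}

lemma mem_freeQuads {G : SimpleGraph V} {c : V → V → ℕ} {F : Finset (V × V × V × V)}
    {q : V × V × V × V} :
    q ∈ freeQuads G c F ↔
      IsPCPath G c (quadVerts q) ∧ ∀ p ∈ F, ∀ v ∈ quadVerts q, v ∉ quadVerts p := by
  simp [freeQuads]

lemma disjoint_freeQuads (G : SimpleGraph V) (c : V → V → ℕ) (F : Finset (V × V × V × V)) :
    Disjoint (freeQuads G c F) F :=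
  disjoint_left.2 fun q hq hqF =>
    mem_freeQuads.1 hq |>.2 q hqF q.1 (by simp [quadVerts]) (by simp [quadVerts])

lemma IsDisjointPCFamily.insert {G : SimpleGraph V} {c : V → V → ℕ} {F : Finset (V × V × V × V)}
    (hF : IsDisjointPCFamily G c F) {q : V × V × V × V} (hq : q ∈ freeQuads G c F) :
    IsDisjointPCFamily G c (insert q F) := by
  obtain ⟨hqPC, hqF⟩ := mem_freeQuads.1 hq
  refine ⟨forall_mem_insert _ _ _ |>.2 ⟨hqPC, hF.1⟩, ?_⟩
  intro p hp r hr hpr v hvp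
  rcases mem_insert.1 hp with hpq | hp <;> rcases mem_insert.1 hr with hrq | hr
  · exact absurd (hpq.trans hrq.symm) hpr
  · exact hqF r hr v (hpq ▸ hvp)
  · exact fun hvr => hqF p hp v (hrq ▸ hvr) hvp
  · exact hF.2 p hp r hr hpr v hvp

lemma card_le_card_freeQuads_inter_add {G : SimpleGraph V} {c : V → V → ℕ}
    (F : Finset (V × V × V × V)) {S : Finset (V × V × V × V)}
    (hS : ∀ q ∈ S, IsPCPath G c (quadVerts q)) :
    #S ≤ #(freeQuads G c F ∩ S) + 16 * #F * Fintype.card V ^ 3 := by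
  have hsub : S ⊆ freeQuads G c F ∩ S ∪
      ({q | ∃ p ∈ F, ∃ v ∈ quadVerts q, v ∈ quadVerts p} : Finset (V × V × V × V)) := by
    intro q hqS
    by_cases hmeet : ∃ p ∈ F, ∃ v ∈ quadVerts q, v ∈ quadVerts p
    · exact mem_union_right _ (by simpa using hmeet)
    · push Not at hmeet
      exact mem_union_left _ (mem_inter.2 ⟨mem_freeQuads.2 ⟨hS q hqS, hmeet⟩, hqS⟩)
  exact (card_le_card hsub).trans
    ((card_union_le _ _).trans (add_le_add_right (card_filter_meets_le F) _))

lemma two_mul_pow_four_mul_exp_le {γ n : ℝ} (hγ : 0 < γ) {m : ℕ} (hm : γ * n / 64 - 1 ≤ m)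
    (hn : 2 * n ^ 4 ≤ exp (γ ^ 2 * n / 256 - 3 * γ / 8)) :
    2 * n ^ 4 * exp (-(3 * γ / 8 * m)) ≤ exp (-(γ ^ 2 * n / 512)) := by
  calc 2 * n ^ 4 * exp (-(3 * γ / 8 * m))
      ≤ exp (γ ^ 2 * n / 256 - 3 * γ / 8) * exp (-(3 * γ / 8 * m)) := by gcongr
    _ ≤ exp (-(γ ^ 2 * n / 512)) := by
      rw [← exp_add]
      gcongr
      nlinarith [mul_le_mul_of_nonneg_left hm (by positivity : (0 : ℝ) ≤ 3 * γ / 8)]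

theorem exists_isDisjointPCFamily_hitting [Nonempty V] (G : SimpleGraph V) (c : V → V → ℕ)
    {γ : ℝ} (hγ : 0 < γ)
    (hn : 2 * (Fintype.card V : ℝ) ^ 4 ≤ exp (γ ^ 2 * Fintype.card V / 256 - 3 * γ / 8))
    (𝒮 : Finset (Finset (V × V × V × V))) (h𝒮 : (#𝒮 : ℝ) ≤ 2 * Fintype.card V ^ 4)
    (hPC : ∀ S ∈ 𝒮, ∀ q ∈ S, IsPCPath G c (quadVerts q))
    (hdense : ∀ S ∈ 𝒮, γ * Fintype.card V ^ 4 ≤ #S) :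
    ∃ F, IsDisjointPCFamily G c F ∧ (#F : ℝ) ≤ γ * Fintype.card V / 64 ∧
      ∀ S ∈ 𝒮, γ ^ 2 * Fintype.card V / 512 ≤ #(F ∩ S) := by
  set m := ⌊γ * Fintype.card V / 64⌋₊
  have hm : (m : ℝ) ≤ γ * Fintype.card V / 64 := Nat.floor_le (by positivity)
  have hfree : ∀ F : Finset (V × V × V × V), #F < m → ∀ S ∈ 𝒮,
      3 * γ / 4 * Fintype.card (V × V × V × V) ≤ #(freeQuads G c F ∩ S) := by
    intro F hF S hS
    have hcount : (#S : ℝ) ≤ #(freeQuads G c F ∩ S) + 16 * #F * (Fintype.card V : ℝ) ^ 3 := by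
      exact_mod_cast card_le_card_freeQuads_inter_add F (hPC S hS)
    have hF' : (#F : ℝ) * (Fintype.card V : ℝ) ^ 3 ≤
        γ * Fintype.card V / 64 * (Fintype.card V : ℝ) ^ 3 := by
      gcongr
      exact (Nat.cast_le.2 hF.le).trans hm
    simp only [Fintype.card_prod, Nat.cast_mul]
    nlinarith [hdense S hS]
  obtain ⟨F, hF, hFm, hpot⟩ := exists_expPotential_le 𝒮 (IsDisjointPCFamily G c) (freeQuads G c)
    (by simp [IsDisjointPCFamily]) (fun F hF q hq => hF.insert hq) (disjoint_freeQuads G c)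
    (3 * γ / 4) m (fun F _ => hfree F)
  refine ⟨F, hF, (Nat.cast_le.2 hFm).trans hm, fun S hS => ?_⟩
  have hexp : exp (-(#(F ∩ S) : ℝ)) ≤ exp (-(γ ^ 2 * Fintype.card V / 512)) :=
    calc exp (-(#(F ∩ S) : ℝ)) ≤ expPotential 𝒮 F := exp_neg_card_inter_le_expPotential hS F
      _ ≤ #𝒮 * exp (-(3 * γ / 4 / 2 * m)) := hpot
      _ ≤ 2 * (Fintype.card V : ℝ) ^ 4 * exp (-(3 * γ / 8 * m)) := by
        rw [show 3 * γ / 4 / 2 = 3 * γ / 8 by ring]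
        gcongr
      _ ≤ exp (-(γ ^ 2 * Fintype.card V / 512)) :=
        two_mul_pow_four_mul_exp_le hγ
          (by linarith [Nat.lt_floor_add_one (γ * Fintype.card V / 64)]) hn
  linarith [exp_le_exp.1 hexp]

end Quadruples

lemma ncard_coe_inter_eq_card_inter_toFinset {α : Type*} [DecidableEq α] (F : Finset α)
    (T : Set α) [Fintype T] : ((F : Set α) ∩ T).ncard = #(F ∩ T.toFinset) := by
  rw [← Set.ncard_coe_finset, coe_inter, Set.coe_toFinset]

section Targets

open Classical

variable {V : Type*} [Fintype V]

def IsEdgePairQuad (G : SimpleGraph V) (w : V × V × V × V) : Prop :=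
  (quadVerts w).Nodup ∧ G.Adj w.1 w.2.1 ∧ G.Adj w.2.2.1 w.2.2.2

noncomputable def absorberTargets (G : SimpleGraph V) (c : V → V → ℕ) :
    Finset (Finset (V × V × V × V)) :=
  univ.image (fun x => (Labs G c x).toFinset) ∪
    ({w | IsEdgePairQuad G w} : Finset (V × V × V × V)).image
      fun w => (LabsE G c w.1 w.2.1 w.2.2.1 w.2.2.2).toFinset

lemma forall_mem_absorberTargets {G : SimpleGraph V} {c : V → V → ℕ}
    {P : Finset (V × V × V × V) → Prop} :
    (∀ S ∈ absorberTargets G c, P S) ↔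
      (∀ x, P (Labs G c x).toFinset) ∧
        ∀ x₁ x₂ y₁ y₂, IsEdgePairQuad G (x₁, x₂, y₁, y₂) →
          P (LabsE G c x₁ x₂ y₁ y₂).toFinset := by
  simp only [absorberTargets, forall_mem_union, forall_mem_image, mem_univ, forall_const,
    mem_filter, true_and, Prod.forall]

lemma card_absorberTargets_le (G : SimpleGraph V) (c : V → V → ℕ) :
    (#(absorberTargets G c) : ℝ) ≤ 2 * Fintype.card V ^ 4 := by
  have h : #(absorberTargets G c) ≤ Fintype.card V + Fintype.card V ^ 4 := by
    refine (card_union_le _ _).trans (add_le_add (card_image_le.trans (card_univ.le)) ?_)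
    refine card_image_le.trans ((card_filter_le _ _).trans (le_of_eq ?_))
    simp only [card_univ, Fintype.card_prod]
    ring
  have h1 : Fintype.card V ≤ Fintype.card V ^ 4 := Nat.le_self_pow (by norm_num) _
  exact_mod_cast h.trans (by omega)

end Targets

lemma eventually_two_mul_pow_four_le_exp {γ : ℝ} (hγ : 0 < γ) :
    ∀ᶠ n : ℕ in atTop, 2 * (n : ℝ) ^ 4 ≤ exp (γ ^ 2 * n / 256 - 3 * γ / 8) := by
  have h := (isLittleO_pow_exp_pos_mul_atTop 4 (by positivity : (0 : ℝ) < γ ^ 2 / 256)).bound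
    (by positivity : (0 : ℝ) < exp (-(3 * γ / 8)) / 2)
  filter_upwards [tendsto_natCast_atTop_atTop.eventually h] with n hn
  rw [norm_of_nonneg (by positivity), norm_of_nonneg (exp_pos _).le] at hn
  rw [sub_eq_add_neg, exp_add, mul_comm (exp _), mul_div_right_comm (γ ^ 2)]
  linarith

end AbsorbingPaths

open AbsorbingPaths in
theorem stmt17_general (γ : ℝ) (hγ0 : 0 < γ) :
    ∃ n₀ : ℕ, ∀ (V : Type) [Fintype V] (G : SimpleGraph V) (c : V → V → ℕ),
      (∀ u v, c u v = c v u) →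
      n₀ ≤ Fintype.card V →
      (∀ x : V, γ * (Fintype.card V : ℝ) ^ 4 ≤ (Labs G c x).ncard) →
      (∀ x₁ x₂ y₁ y₂ : V, ([x₁, x₂, y₁, y₂] : List V).Nodup →
        G.Adj x₁ x₂ → G.Adj y₁ y₂ →
        γ * (Fintype.card V : ℝ) ^ 4 ≤ (LabsE G c x₁ x₂ y₁ y₂).ncard) →
      ∃ F' : Finset (V × V × V × V),
        (∀ p ∈ F', IsPCPath G c [p.1, p.2.1, p.2.2.1, p.2.2.2]) ∧
        (∀ p ∈ F', ∀ q ∈ F', p ≠ q →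
          ∀ v ∈ [p.1, p.2.1, p.2.2.1, p.2.2.2], v ∉ ([q.1, q.2.1, q.2.2.1, q.2.2.2] : List V)) ∧
        (F'.card : ℝ) ≤ γ * (Fintype.card V : ℝ) / 64 ∧
        (∀ x : V,
          γ ^ 2 * (Fintype.card V : ℝ) / 512 ≤ ((F' : Set (V × V × V × V)) ∩ Labs G c x).ncard) ∧
        (∀ x₁ x₂ y₁ y₂ : V, ([x₁, x₂, y₁, y₂] : List V).Nodup →
          G.Adj x₁ x₂ → G.Adj y₁ y₂ →
          γ ^ 2 * (Fintype.card V : ℝ) / 512 ≤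
            ((F' : Set (V × V × V × V)) ∩ LabsE G c x₁ x₂ y₁ y₂).ncard) := by
  obtain ⟨n₀, hn₀⟩ :=
    eventually_atTop.1 ((eventually_two_mul_pow_four_le_exp hγ0).and (eventually_ge_atTop 1))
  refine ⟨n₀, fun V _ G c _ hn hL hLE => ?_⟩
  classical
  obtain ⟨hexp, hn1⟩ := hn₀ _ hn
  have : Nonempty V := Fintype.card_pos_iff.1 hn1
  have hPC : ∀ S ∈ absorberTargets G c, ∀ q ∈ S, IsPCPath G c (quadVerts q) :=
    forall_mem_absorberTargets.2 ⟨fun _ _ hq => (Set.mem_toFinset.1 hq).2.2.2.2.1,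
      fun _ _ _ _ _ _ hq => (Set.mem_toFinset.1 hq).2.1⟩
  have hdense : ∀ S ∈ absorberTargets G c, γ * Fintype.card V ^ 4 ≤ #S :=
    forall_mem_absorberTargets.2 ⟨fun x => Set.ncard_eq_toFinset_card' (Labs G c x) ▸ hL x,
      fun x₁ x₂ y₁ y₂ ⟨hnd, h₁, h₂⟩ =>
        Set.ncard_eq_toFinset_card' (LabsE G c x₁ x₂ y₁ y₂) ▸ hLE x₁ x₂ y₁ y₂ hnd h₁ h₂⟩
  obtain ⟨F, ⟨hFPC, hFdisj⟩, hFcard, hhit⟩ :=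
    exists_isDisjointPCFamily_hitting G c hγ0 hexp _ (card_absorberTargets_le G c) hPC hdense
  obtain ⟨hhitL, hhitLE⟩ := forall_mem_absorberTargets.1 hhit
  refine ⟨F, hFPC, hFdisj, hFcard, fun x => ?_, fun x₁ x₂ y₁ y₂ hnd h₁ h₂ => ?_⟩
  · rw [ncard_coe_inter_eq_card_inter_toFinset]
    exact hhitL x
  · rw [ncard_coe_inter_eq_card_inter_toFinset]
    exact hhitLE x₁ x₂ y₁ y₂ ⟨hnd, h₁, h₂⟩

/-- If every absorbing family `L(x)` and `L(x₁,x₂;y₁,y₂)` has size at least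
`γn⁴`, then there is a family `F'` of pairwise vertex-disjoint properly coloured paths of
length 3 with `|F'| ≤ 2⁻⁶γn` hitting every `L(x)` and every `L(x₁,x₂;y₁,y₂)` in at least
`2⁻⁹γ²n` members. -/
theorem stmt17 (γ : ℝ) (hγ0 : 0 < γ) (hγ1 : γ < 1) :
    ∃ n₀ : ℕ, ∀ (V : Type) [Fintype V] (G : SimpleGraph V) (c : V → V → ℕ),
      (∀ u v, c u v = c v u) →
      n₀ ≤ Fintype.card V →
      (∀ x : V, γ * (Fintype.card V : ℝ) ^ 4 ≤ (Labs G c x).ncard) →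
      (∀ x₁ x₂ y₁ y₂ : V, ([x₁, x₂, y₁, y₂] : List V).Nodup →
        G.Adj x₁ x₂ → G.Adj y₁ y₂ →
        γ * (Fintype.card V : ℝ) ^ 4 ≤ (LabsE G c x₁ x₂ y₁ y₂).ncard) →
      ∃ F' : Finset (V × V × V × V),
        (∀ p ∈ F', IsPCPath G c [p.1, p.2.1, p.2.2.1, p.2.2.2]) ∧
        (∀ p ∈ F', ∀ q ∈ F', p ≠ q →
          ∀ v ∈ [p.1, p.2.1, p.2.2.1, p.2.2.2], v ∉ ([q.1, q.2.1, q.2.2.1, q.2.2.2] : List V)) ∧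
        (F'.card : ℝ) ≤ γ * (Fintype.card V : ℝ) / 64 ∧
        (∀ x : V,
          γ ^ 2 * (Fintype.card V : ℝ) / 512 ≤ ((F' : Set (V × V × V × V)) ∩ Labs G c x).ncard) ∧
        (∀ x₁ x₂ y₁ y₂ : V, ([x₁, x₂, y₁, y₂] : List V).Nodup →
          G.Adj x₁ x₂ → G.Adj y₁ y₂ →
          γ ^ 2 * (Fintype.card V : ℝ) / 512 ≤
            ((F' : Set (V × V × V × V)) ∩ LabsE G c x₁ x₂ y₁ y₂).ncard) :=
  stmt17_general γ hγ0
end
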